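/- arXiv:2205.07391 — 8 statements merged into one kernel-verified Lean document; each statement's English description precedes it below -/
import Mathlib

section
/- Suppose the system x' = (A(t) - γ μ'(t)/μ(t) I)x admits a nonuniform μ-dichotomy with invariant projections P(t). Then U_γ = Im P, V_γ = Ker P, and U_γ ⊕ V_γ = ℝ × ℝⁿ (i.e. for each s, U_γ(s) = Im P(s), V_γ(s) = Ker P(s), and these subspaces are complementary in ℝⁿ). -/
open Filter Topology

noncomputable section

/-- Bounded linear operators on ℝⁿ. -/
abbrev Op (n : ℕ) := EuclideanSpace ℝ (Fin n) →L[ℝ] EuclideanSpace ℝ (Fin n)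

/-- μ is a growth rate: strictly increasing, positive, μ(0)=1, μ→∞ at +∞, μ→0 at -∞. -/
def GrowthRate (μ : ℝ → ℝ) : Prop :=
  StrictMono μ ∧ (∀ t, 0 < μ t) ∧ μ 0 = 1 ∧
    Tendsto μ atTop atTop ∧ Tendsto μ atBot (nhds 0)

/-- The evolution operator Ψ admits a nonuniform μ-dichotomy with invariant projections P
and constants K, α, β, θ, ν. -/
def NuDWith {n : ℕ} (μ : ℝ → ℝ) (Ψ : ℝ → ℝ → Op n) (P : ℝ → Op n)
    (K α β θ ν : ℝ) : Prop :=
  (∀ t, P t ∘L P t = P t) ∧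
  (∀ t s, P t ∘L Ψ t s = Ψ t s ∘L P s) ∧
  1 ≤ K ∧ α < 0 ∧ 0 < β ∧ 0 ≤ θ ∧ 0 ≤ ν ∧ α + θ < 0 ∧ 0 < β - ν ∧
  (∀ t s, s ≤ t → ‖Ψ t s ∘L P s‖ ≤ K * (μ t / μ s) ^ α * μ s ^ (Real.sign s * θ)) ∧
  (∀ t s, t ≤ s → ‖Ψ t s ∘L (1 - P s)‖ ≤ K * (μ t / μ s) ^ β * μ s ^ (Real.sign s * ν))

/-- The evolution operator Ψ admits a nonuniform μ-dichotomy. -/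
def NuD {n : ℕ} (μ : ℝ → ℝ) (Ψ : ℝ → ℝ → Op n) : Prop :=
  ∃ P K α β θ ν, NuDWith μ Ψ P K α β θ ν

/-- The evolution operator Φ_γ(t,s) = (μ(t)/μ(s))^{-γ} Φ(t,s) of the shifted system. -/
def shiftEvo {n : ℕ} (μ : ℝ → ℝ) (γ : ℝ) (Φ : ℝ → ℝ → Op n) : ℝ → ℝ → Op n :=
  fun t s => (μ t / μ s) ^ (-γ) • Φ t s

/-- The nonuniform μ-resolvent set. -/
def resolventND {n : ℕ} (μ : ℝ → ℝ) (Φ : ℝ → ℝ → Op n) : Set ℝ :=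
  {γ | NuD μ (shiftEvo μ γ Φ)}

/-- The nonuniform μ-dichotomy spectrum. -/
def spectrumND {n : ℕ} (μ : ℝ → ℝ) (Φ : ℝ → ℝ → Op n) : Set ℝ :=
  (resolventND μ Φ)ᶜ

/-- Φ is the evolution operator of x' = A(t)x. -/
def IsEvolutionOp {n : ℕ} (A : ℝ → Op n) (Φ : ℝ → ℝ → Op n) : Prop :=
  (∀ s, Φ s s = 1) ∧ (∀ t τ s, Φ t τ ∘L Φ τ s = Φ t s) ∧
    (∀ s t, HasDerivAt (fun r => Φ r s) (A t ∘L Φ t s) t)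

/-- U_γ = {(s,ξ) : sup_{t ≥ 0} ‖Φ(t,s)ξ‖ μ(t)^{-γ} < ∞}. -/
def Uset {n : ℕ} (μ : ℝ → ℝ) (Φ : ℝ → ℝ → Op n) (γ : ℝ) : Set (ℝ × EuclideanSpace ℝ (Fin n)) :=
  {p | ∃ C, ∀ t, 0 ≤ t → ‖Φ t p.1 p.2‖ * μ t ^ (-γ) ≤ C}

/-- V_γ = {(s,ξ) : sup_{t ≤ 0} ‖Φ(t,s)ξ‖ μ(t)^{-γ} < ∞}. -/
def Vset {n : ℕ} (μ : ℝ → ℝ) (Φ : ℝ → ℝ → Op n) (γ : ℝ) : Set (ℝ × EuclideanSpace ℝ (Fin n)) :=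
  {p | ∃ C, ∀ t, t ≤ 0 → ‖Φ t p.1 p.2‖ * μ t ^ (-γ) ≤ C}

/-- If the γ-shifted system admits a nonuniform μ-dichotomy with
projections P(t), then U_γ = Im P, V_γ = Ker P, and U_γ ⊕ V_γ = ℝ × ℝⁿ. -/
theorem stmt6 (n : ℕ) (A : ℝ → Op n) (hA : Continuous A)
    (Φ : ℝ → ℝ → Op n) (hΦ : IsEvolutionOp A Φ)
    (μ : ℝ → ℝ) (hgr : GrowthRate μ) (hdiff : Differentiable ℝ μ)
    (γ : ℝ) (P : ℝ → Op n) (K α β θ ν : ℝ)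
    (hdich : NuDWith μ (shiftEvo μ γ Φ) P K α β θ ν) :
    ∀ s : ℝ,
      (∀ ξ, (s, ξ) ∈ Uset μ Φ γ ↔ ξ ∈ Set.range (P s)) ∧
      (∀ ξ, (s, ξ) ∈ Vset μ Φ γ ↔ P s ξ = 0) ∧
      (∀ ξ : EuclideanSpace ℝ (Fin n), ∃ u v, u ∈ Set.range (P s) ∧ P s v = 0 ∧ ξ = u + v) := by
  obtain ⟨hPP, hcomm, hK, hα, hβ, hθ, hν, hαθ, hβν, hbP, hbQ⟩ := hdich
  obtain ⟨hmono, hpos, hone, htop, hbot⟩ := hgr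
  intro s
  set Ψ : ℝ → ℝ → Op n := shiftEvo μ γ Φ with hΨdef
  have hK0 : (0:ℝ) ≤ K := le_trans zero_le_one hK
  have hΨapp : ∀ t r (x : EuclideanSpace ℝ (Fin n)),
      Ψ t r x = (μ t / μ r) ^ (-γ) • Φ t r x := by
    intro t r x; rw [hΨdef]; rfl
  have hΨcoc : ∀ t τ r, Ψ t τ ∘L Ψ τ r = Ψ t r := by
    intro t τ r
    rw [hΨdef]
    show ((μ t / μ τ) ^ (-γ) • Φ t τ) ∘L ((μ τ / μ r) ^ (-γ) • Φ τ r)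
        = (μ t / μ r) ^ (-γ) • Φ t r
    rw [ContinuousLinearMap.smul_comp, ContinuousLinearMap.comp_smul, smul_smul, hΦ.2.1,
      ← Real.mul_rpow (div_pos (hpos t) (hpos τ)).le (div_pos (hpos τ) (hpos r)).le]
    congr 2
    field_simp [(hpos t).ne', (hpos τ).ne', (hpos r).ne']
  have hΨss : ∀ r, Ψ r r = 1 := by
    intro r
    rw [hΨdef]
    show (μ r / μ r) ^ (-γ) • Φ r r = 1
    rw [div_self (hpos r).ne', Real.one_rpow, one_smul, hΦ.1]
  have hμsγ : (0:ℝ) < μ s ^ (-γ) := Real.rpow_pos_of_pos (hpos s) _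
  have hconv : ∀ t (x : EuclideanSpace ℝ (Fin n)),
      ‖Φ t s x‖ * μ t ^ (-γ) = μ s ^ (-γ) * ‖Ψ t s x‖ := by
    intro t x
    have h1 : ‖Ψ t s x‖ = (μ t / μ s) ^ (-γ) * ‖Φ t s x‖ := by
      rw [hΨapp, norm_smul, Real.norm_eq_abs,
        abs_of_pos (Real.rpow_pos_of_pos (div_pos (hpos t) (hpos s)) _)]
    rw [h1, Real.div_rpow (hpos t).le (hpos s).le]
    field_simp
  have hcont : ∀ x : EuclideanSpace ℝ (Fin n),
      Continuous (fun t => ‖Φ t s x‖ * μ t ^ (-γ)) := by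
    intro x
    have h1 : Continuous fun t => Φ t s :=
      continuous_iff_continuousAt.2 fun t => (hΦ.2.2 s t).continuousAt
    have h2 : Continuous fun t => Φ t s x := h1.clm_apply continuous_const
    exact h2.norm.mul (hdiff.continuous.rpow_const fun t => Or.inl (hpos t).ne')
  have hcommP : ∀ t r (x : EuclideanSpace ℝ (Fin n)),
      P t (Ψ t r x) = Ψ t r (P r x) := by
    intro t r x
    have := ContinuousLinearMap.ext_iff.1 (hcomm t r) x
    simpa using this
  have hcommQ : ∀ t r (x : EuclideanSpace ℝ (Fin n)),
      Ψ t r x - P t (Ψ t r x) = Ψ t r (x - P r x) := by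
    intro t r x
    rw [map_sub, hcommP]
  have hPapp : ∀ t r (x : EuclideanSpace ℝ (Fin n)), r ≤ t →
      ‖Ψ t r (P r x)‖ ≤ K * (μ t / μ r) ^ α * μ r ^ (Real.sign r * θ) * ‖x‖ := by
    intro t r x h
    calc ‖Ψ t r (P r x)‖ = ‖(Ψ t r ∘L P r) x‖ := rfl
      _ ≤ ‖Ψ t r ∘L P r‖ * ‖x‖ := ContinuousLinearMap.le_opNorm _ _
      _ ≤ _ := mul_le_mul_of_nonneg_right (hbP t r h) (norm_nonneg x)
  have hQapp : ∀ t r (x : EuclideanSpace ℝ (Fin n)), t ≤ r →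
      ‖Ψ t r (x - P r x)‖ ≤ K * (μ t / μ r) ^ β * μ r ^ (Real.sign r * ν) * ‖x‖ := by
    intro t r x h
    have he : Ψ t r (x - P r x) = (Ψ t r ∘L (1 - P r)) x := by
      simp [ContinuousLinearMap.comp_apply, ContinuousLinearMap.sub_apply, map_sub]
    calc ‖Ψ t r (x - P r x)‖ = ‖(Ψ t r ∘L (1 - P r)) x‖ := by rw [he]
      _ ≤ ‖Ψ t r ∘L (1 - P r)‖ * ‖x‖ := ContinuousLinearMap.le_opNorm _ _
      _ ≤ _ := mul_le_mul_of_nonneg_right (hbQ t r h) (norm_nonneg x)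
  refine ⟨?_, ?_, ?_⟩
  · -- U_γ = Im P
    intro ξ
    constructor
    · rintro ⟨C, hC⟩
      have hC0 : (0:ℝ) ≤ C :=
        le_trans (mul_nonneg (norm_nonneg _) (Real.rpow_nonneg (hpos 0).le _)) (hC 0 le_rfl)
      set C' : ℝ := (μ s ^ (-γ))⁻¹ * C with hC'def
      have hC'0 : (0:ℝ) ≤ C' := mul_nonneg (inv_nonneg.2 hμsγ.le) hC0
      have hΨbd : ∀ t, 0 ≤ t → ‖Ψ t s ξ‖ ≤ C' := by
        intro t ht
        have h := hC t ht
        rw [hconv t ξ] at h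
        rw [hC'def]
        calc ‖Ψ t s ξ‖ = (μ s ^ (-γ))⁻¹ * (μ s ^ (-γ) * ‖Ψ t s ξ‖) := by
              field_simp
          _ ≤ (μ s ^ (-γ))⁻¹ * C := mul_le_mul_of_nonneg_left h (inv_nonneg.2 hμsγ.le)
      have key : ∀ t, max s 1 ≤ t →
          ‖ξ - P s ξ‖ ≤ K * μ s ^ β * C' * μ t ^ (ν - β) := by
        intro t ht
        have hst : s ≤ t := le_trans (le_max_left _ _) ht
        have ht0 : (0:ℝ) < t := lt_of_lt_of_le one_pos (le_trans (le_max_right _ _) ht)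
        have hid : ξ - P s ξ = Ψ s t (Ψ t s ξ - P t (Ψ t s ξ)) := by
          rw [hcommQ, ← ContinuousLinearMap.comp_apply, hΨcoc s t s, hΨss]
          simp
        rw [hid]
        have h1 := hQapp s t (Ψ t s ξ) hst
        rw [Real.sign_of_pos ht0, one_mul] at h1
        have h2 : K * (μ s / μ t) ^ β * μ t ^ ν * ‖Ψ t s ξ‖
            ≤ K * (μ s / μ t) ^ β * μ t ^ ν * C' := by
          exact mul_le_mul_of_nonneg_left (hΨbd t ht0.le)
            (mul_nonneg (mul_nonneg hK0
              (Real.rpow_nonneg (div_pos (hpos s) (hpos t)).le β))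
              (Real.rpow_nonneg (hpos t).le ν))
        have h3 : K * (μ s / μ t) ^ β * μ t ^ ν * C' = K * μ s ^ β * C' * μ t ^ (ν - β) := by
          rw [Real.div_rpow (hpos s).le (hpos t).le, Real.rpow_sub (hpos t)]
          have hne : μ t ^ β ≠ 0 := (Real.rpow_pos_of_pos (hpos t) β).ne'
          field_simp
        linarith [le_trans h1 h2]
      have hten : Tendsto (fun t => K * μ s ^ β * C' * μ t ^ (ν - β)) atTop (𝓝 0) := by
        have h1 : Tendsto (fun t => μ t ^ (ν - β)) atTop (𝓝 0) := by
          have : ν - β = -(β - ν) := by ring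
          rw [this]
          exact (tendsto_rpow_neg_atTop hβν).comp htop
        simpa using h1.const_mul (K * μ s ^ β * C')
      have hfin : ‖ξ - P s ξ‖ ≤ 0 :=
        ge_of_tendsto hten (eventually_atTop.2 ⟨max s 1, key⟩)
      have : ξ - P s ξ = 0 := norm_le_zero_iff.1 hfin
      exact ⟨ξ, by rw [eq_comm, ← sub_eq_zero]; simpa using this⟩
    · rintro ⟨y, hy⟩
      have hPξ : P s ξ = ξ := by
        rw [← hy, ← ContinuousLinearMap.comp_apply, hPP]
      obtain ⟨C₀, hC₀⟩ := (isCompact_Icc (a := (0:ℝ)) (b := max s 0)).exists_bound_of_continuousOn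
        (hcont ξ).continuousOn
      refine ⟨max C₀ (μ s ^ (-γ) * (K * μ s ^ (Real.sign s * θ) * ‖ξ‖)), ?_⟩
      intro t ht
      rcases le_total t s with hts | hst
      · have hmem : t ∈ Set.Icc (0:ℝ) (max s 0) := ⟨ht, le_trans hts (le_max_left _ _)⟩
        have := hC₀ t hmem
        rw [Real.norm_eq_abs] at this
        exact le_trans (le_trans (le_abs_self _) this) (le_max_left _ _)
      · rw [hconv t ξ]
        have h2 := hPapp t s ξ hst
        rw [hPξ] at h2
        have h3 : (μ t / μ s) ^ α ≤ 1 :=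
          Real.rpow_le_one_of_one_le_of_nonpos
            ((one_le_div (hpos s)).2 (hmono.monotone hst)) hα.le
        have hsθ : (0:ℝ) ≤ μ s ^ (Real.sign s * θ) := Real.rpow_nonneg (hpos s).le _
        have h4 : K * (μ t / μ s) ^ α * μ s ^ (Real.sign s * θ) * ‖ξ‖
            ≤ K * μ s ^ (Real.sign s * θ) * ‖ξ‖ := by
          have h5 : K * (μ t / μ s) ^ α ≤ K := mul_le_of_le_one_right hK0 h3
          exact mul_le_mul_of_nonneg_right
            (mul_le_mul_of_nonneg_right h5 hsθ) (norm_nonneg ξ)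
        have h6 : μ s ^ (-γ) * ‖Ψ t s ξ‖
            ≤ μ s ^ (-γ) * (K * μ s ^ (Real.sign s * θ) * ‖ξ‖) := by
          apply mul_le_mul_of_nonneg_left _ hμsγ.le
          calc ‖Ψ t s ξ‖ ≤ K * (μ t / μ s) ^ α * μ s ^ (Real.sign s * θ) * ‖ξ‖ := h2
            _ ≤ _ := h4
        exact le_trans h6 (le_max_right _ _)
  · -- V_γ = Ker P
    intro ξ
    constructor
    · rintro ⟨C, hC⟩
      have hμ00 : (0:ℝ) < μ 0 := hpos 0
      have hC0 : (0:ℝ) ≤ C :=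
        le_trans (mul_nonneg (norm_nonneg _) (Real.rpow_nonneg hμ00.le _)) (hC 0 le_rfl)
      set C' : ℝ := (μ s ^ (-γ))⁻¹ * C with hC'def
      have hC'0 : (0:ℝ) ≤ C' := mul_nonneg (inv_nonneg.2 hμsγ.le) hC0
      have hΨbd : ∀ t, t ≤ 0 → ‖Ψ t s ξ‖ ≤ C' := by
        intro t ht
        have h := hC t ht
        rw [hconv t ξ] at h
        rw [hC'def]
        calc ‖Ψ t s ξ‖ = (μ s ^ (-γ))⁻¹ * (μ s ^ (-γ) * ‖Ψ t s ξ‖) := by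
              field_simp
          _ ≤ (μ s ^ (-γ))⁻¹ * C := mul_le_mul_of_nonneg_left h (inv_nonneg.2 hμsγ.le)
      have key : ∀ t, t ≤ min s (-1) →
          ‖P s ξ‖ ≤ K * μ s ^ α * C' * μ t ^ (-(α + θ)) := by
        intro t ht
        have hts : t ≤ s := le_trans ht (min_le_left _ _)
        have ht0 : t < 0 := lt_of_le_of_lt (le_trans ht (min_le_right _ _)) (by norm_num)
        have hid : P s ξ = Ψ s t (P t (Ψ t s ξ)) := by
          rw [hcommP, ← ContinuousLinearMap.comp_apply, hΨcoc s t s, hΨss]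
          simp
        rw [hid]
        have h1 := hPapp s t (Ψ t s ξ) hts
        rw [Real.sign_of_neg ht0] at h1
        have h2 : K * (μ s / μ t) ^ α * μ t ^ (-1 * θ) * ‖Ψ t s ξ‖
            ≤ K * (μ s / μ t) ^ α * μ t ^ (-1 * θ) * C' := by
          exact mul_le_mul_of_nonneg_left (hΨbd t ht0.le)
            (mul_nonneg (mul_nonneg hK0
              (Real.rpow_nonneg (div_pos (hpos s) (hpos t)).le α))
              (Real.rpow_nonneg (hpos t).le (-1 * θ)))
        have h3 : K * (μ s / μ t) ^ α * μ t ^ (-1 * θ) * C'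
            = K * μ s ^ α * C' * μ t ^ (-(α + θ)) := by
          rw [Real.div_rpow (hpos s).le (hpos t).le]
          have h7 : μ t ^ (-(α + θ)) = μ t ^ (-1 * θ - α) := by norm_num; ring_nf
          rw [h7, Real.rpow_sub (hpos t)]
          have hne : μ t ^ α ≠ 0 := (Real.rpow_pos_of_pos (hpos t) α).ne'
          field_simp
        linarith [le_trans h1 h2]
      have hten : Tendsto (fun t => K * μ s ^ α * C' * μ t ^ (-(α + θ))) atBot (𝓝 0) := by
        have hcpos : (0:ℝ) < -(α + θ) := by linarith
        have h0 : Tendsto (fun x : ℝ => x ^ (-(α + θ))) (𝓝 0) (𝓝 ((0:ℝ) ^ (-(α + θ)))) :=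
          (Real.continuousAt_rpow_const 0 _ (Or.inr hcpos.le)).tendsto
        rw [Real.zero_rpow hcpos.ne'] at h0
        have h1 : Tendsto (fun t => μ t ^ (-(α + θ))) atBot (𝓝 0) := h0.comp hbot
        simpa using h1.const_mul (K * μ s ^ α * C')
      have hfin : ‖P s ξ‖ ≤ 0 :=
        ge_of_tendsto hten (eventually_atBot.2 ⟨min s (-1), key⟩)
      exact norm_le_zero_iff.1 hfin
    · intro hPξ
      have hQξ : ξ - P s ξ = ξ := by rw [hPξ, sub_zero]
      obtain ⟨C₀, hC₀⟩ := (isCompact_Icc (a := min s 0) (b := (0:ℝ))).exists_bound_of_continuousOn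
        (hcont ξ).continuousOn
      refine ⟨max C₀ (μ s ^ (-γ) * (K * μ s ^ (Real.sign s * ν) * ‖ξ‖)), ?_⟩
      intro t ht
      rcases le_total s t with hst | hts
      · have hmem : t ∈ Set.Icc (min s 0) (0:ℝ) := ⟨le_trans (min_le_left s 0) hst, ht⟩
        have := hC₀ t hmem
        rw [Real.norm_eq_abs] at this
        exact le_trans (le_trans (le_abs_self _) this) (le_max_left _ _)
      · rw [hconv t ξ]
        have h2 := hQapp t s ξ hts
        rw [hQξ] at h2
        have h3 : (μ t / μ s) ^ β ≤ 1 :=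
          Real.rpow_le_one (div_pos (hpos t) (hpos s)).le ((div_le_one (hpos s)).2 (hmono.monotone hts)) hβ.le
        have hsν : (0:ℝ) ≤ μ s ^ (Real.sign s * ν) := Real.rpow_nonneg (hpos s).le _
        have h4 : K * (μ t / μ s) ^ β * μ s ^ (Real.sign s * ν) * ‖ξ‖
            ≤ K * μ s ^ (Real.sign s * ν) * ‖ξ‖ := by
          have h5 : K * (μ t / μ s) ^ β ≤ K := mul_le_of_le_one_right hK0 h3
          exact mul_le_mul_of_nonneg_right
            (mul_le_mul_of_nonneg_right h5 hsν) (norm_nonneg ξ)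
        have h6 : μ s ^ (-γ) * ‖Ψ t s ξ‖
            ≤ μ s ^ (-γ) * (K * μ s ^ (Real.sign s * ν) * ‖ξ‖) := by
          apply mul_le_mul_of_nonneg_left _ hμsγ.le
          exact le_trans h2 h4
        exact le_trans h6 (le_max_right _ _)
  · -- decomposition
    intro ξ
    refine ⟨P s ξ, ξ - P s ξ, ⟨ξ, rfl⟩, ?_, by abel⟩
    rw [map_sub, ← ContinuousLinearMap.comp_apply, hPP, sub_self]
end
end

section
/- The nonuniform μ-resolvent set ρ^{ND}_μ(A) = {γ ∈ ℝ : x' = (A(t) − γ μ'(t)/μ(t) I)x admits a nonuniform μ-dichotomy} is an open subset of ℝ. Specifically, if γ ∈ ρ^{ND}_μ(A) with dichotomy constants α < 0, β > 0, θ, ν ≥ 0 (α+θ < 0, β−ν > 0), then for every η with |η − γ| < min{(β−ν)/2, −(α+θ)/2}, η ∈ ρ^{ND}_μ(A), with the same invariant projection. -/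
open Filter Topology

noncomputable section

lemma shiftEvo_shift {n : ℕ} (μ : ℝ → ℝ) (hpos : ∀ t, 0 < μ t) (γ η : ℝ)
    (Φ : ℝ → ℝ → Op n) (t s : ℝ) :
    shiftEvo μ η Φ t s = ((μ t / μ s) ^ (γ - η)) • shiftEvo μ γ Φ t s := by
  have hx : 0 < μ t / μ s := div_pos (hpos t) (hpos s)
  simp only [shiftEvo, smul_smul, ← Real.rpow_add hx]
  ring_nf

lemma keyLemma {n : ℕ} (μ : ℝ → ℝ) (hpos : ∀ t, 0 < μ t) (Φ : ℝ → ℝ → Op n)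
    {γ : ℝ} {P : ℝ → Op n} {K α β θ ν : ℝ}
    (h : NuDWith μ (shiftEvo μ γ Φ) P K α β θ ν) (η : ℝ)
    (hη : |η - γ| < min ((β - ν) / 2) (-(α + θ) / 2)) :
    NuDWith μ (shiftEvo μ η Φ) P K (α + γ - η) (β + γ - η) θ ν := by
  obtain ⟨hP, hcomm, hK, hα, hβ, hθ, hν, hαθ, hβν, hbd1, hbd2⟩ := h
  have h1 : |η - γ| < (β - ν) / 2 := lt_of_lt_of_le hη (min_le_left _ _)
  have h2 : |η - γ| < -(α + θ) / 2 := lt_of_lt_of_le hη (min_le_right _ _)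
  have hle : γ - η ≤ |η - γ| := by
    rw [abs_sub_comm]; exact le_abs_self _
  have hge : -(|η - γ|) ≤ γ - η := by
    rw [abs_sub_comm]; exact neg_abs_le _
  have hc : ∀ t s : ℝ, (0:ℝ) < (μ t / μ s) ^ (γ - η) :=
    fun t s => Real.rpow_pos_of_pos (div_pos (hpos t) (hpos s)) _
  refine ⟨hP, ?_, hK, by linarith, by linarith, hθ, hν, by linarith, by linarith, ?_, ?_⟩
  · intro t s
    rw [shiftEvo_shift μ hpos γ η Φ t s, ContinuousLinearMap.comp_smul,
      ContinuousLinearMap.smul_comp, hcomm]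
  · intro t s hts
    rw [shiftEvo_shift μ hpos γ η Φ t s, ContinuousLinearMap.smul_comp]
    calc ‖(μ t / μ s) ^ (γ - η) • (shiftEvo μ γ Φ t s ∘L P s)‖
        = (μ t / μ s) ^ (γ - η) * ‖shiftEvo μ γ Φ t s ∘L P s‖ := by
          rw [norm_smul ((μ t / μ s) ^ (γ - η)) (shiftEvo μ γ Φ t s ∘L P s)]
          rw [Real.norm_eq_abs, abs_of_pos (hc t s)]
      _
        ≤ (μ t / μ s) ^ (γ - η) * (K * (μ t / μ s) ^ α * μ s ^ (Real.sign s * θ)) := by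
          exact mul_le_mul_of_nonneg_left (hbd1 t s hts) (le_of_lt (hc t s))
      _ = K * (μ t / μ s) ^ (α + γ - η) * μ s ^ (Real.sign s * θ) := by
          rw [show α + γ - η = (γ - η) + α by ring,
            Real.rpow_add (div_pos (hpos t) (hpos s))]
          ring
  · intro t s hts
    rw [shiftEvo_shift μ hpos γ η Φ t s, ContinuousLinearMap.smul_comp]
    calc ‖(μ t / μ s) ^ (γ - η) • (shiftEvo μ γ Φ t s ∘L (1 - P s))‖
        = (μ t / μ s) ^ (γ - η) * ‖shiftEvo μ γ Φ t s ∘L (1 - P s)‖ := by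
          exact (norm_smul ((μ t / μ s) ^ (γ - η))
            (shiftEvo μ γ Φ t s ∘L (1 - P s))).trans
            (by rw [Real.norm_eq_abs, abs_of_pos (hc t s)])
      _
        ≤ (μ t / μ s) ^ (γ - η) * (K * (μ t / μ s) ^ β * μ s ^ (Real.sign s * ν)) := by
          exact mul_le_mul_of_nonneg_left (hbd2 t s hts) (le_of_lt (hc t s))
      _ = K * (μ t / μ s) ^ (β + γ - η) * μ s ^ (Real.sign s * ν) := by
          rw [show β + γ - η = (γ - η) + β by ring,
            Real.rpow_add (div_pos (hpos t) (hpos s))]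
          ring

/-- the nonuniform μ-resolvent set is open; moreover every η with
|η - γ| < min{(β-ν)/2, -(α+θ)/2} is in the resolvent set, with the same projection. -/
theorem stmt7 (n : ℕ) (A : ℝ → Op n) (hA : Continuous A)
    (Φ : ℝ → ℝ → Op n) (hΦ : IsEvolutionOp A Φ)
    (μ : ℝ → ℝ) (hgr : GrowthRate μ) (hdiff : Differentiable ℝ μ) :
    IsOpen (resolventND μ Φ) ∧
    ∀ γ P K α β θ ν, NuDWith μ (shiftEvo μ γ Φ) P K α β θ ν →
      ∀ η : ℝ, |η - γ| < min ((β - ν) / 2) (-(α + θ) / 2) →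
        (∃ K' α' β' θ' ν', NuDWith μ (shiftEvo μ η Φ) P K' α' β' θ' ν') ∧
        η ∈ resolventND μ Φ := by
  have hpos := hgr.2.1
  constructor
  · rw [Metric.isOpen_iff]
    rintro γ ⟨P, K, α, β, θ, ν, h⟩
    refine ⟨min ((β - ν) / 2) (-(α + θ) / 2), ?_, ?_⟩
    · exact lt_min (by linarith [h.2.2.2.2.2.2.2.2.1]) (by linarith [h.2.2.2.2.2.2.2.1])
    · intro η hη
      rw [Metric.mem_ball, Real.dist_eq] at hη
      exact ⟨P, K, _, _, θ, ν, keyLemma μ hpos Φ h η hη⟩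
  · intro γ P K α β θ ν h η hη
    have := keyLemma μ hpos Φ h η hη
    exact ⟨⟨K, _, _, θ, ν, this⟩, ⟨P, K, _, _, θ, ν, this⟩⟩
end
end

section
/- If γ ∈ ρ^{ND}_μ(A) and J ⊆ ρ^{ND}_μ(A) is an interval containing γ, then U_η = U_γ and V_η = V_γ for all η ∈ J. -/
open Filter Topology

noncomputable section

private lemma rpow_tendsto_nhdsGT {c : ℝ} (hc : c < 0) :
    Tendsto (fun x : ℝ => x ^ c) (𝓝[>] (0:ℝ)) atTop := by
  have h1 : Tendsto (fun x : ℝ => x⁻¹ ^ (-c)) (𝓝[>] (0:ℝ)) atTop :=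
    (tendsto_rpow_atTop (by linarith)).comp tendsto_inv_nhdsGT_zero
  refine h1.congr' ?_
  filter_upwards [self_mem_nhdsWithin] with x (hx : 0 < x)
  rw [Real.inv_rpow hx.le, Real.rpow_neg hx.le, inv_inv]

private lemma rpow_tendsto_zero {d : ℝ} (hd : 0 < d) :
    Tendsto (fun x : ℝ => x ^ d) (𝓝[>] (0:ℝ)) (𝓝 0) := by
  have h := (Real.continuousAt_rpow_const 0 d (Or.inr hd.le)).tendsto
  rw [Real.zero_rpow hd.ne'] at h
  exact h.mono_left nhdsWithin_le_nhds

private lemma aux1 {a1 a2 e1 e2 : ℝ} (ha1 : 0 < a1) (ha2 : 0 ≤ a2) (he1 : 0 < e1) (he : e2 < e1) :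
    Tendsto (fun x : ℝ => a1 * x ^ e1 - a2 * x ^ e2) atTop atTop := by
  have h2 : Tendsto (fun x : ℝ => a1 / 2 * x ^ e1) atTop atTop :=
    (tendsto_rpow_atTop he1).const_mul_atTop (by linarith)
  refine tendsto_atTop_mono' _ ?_ h2
  have h3 : Tendsto (fun x : ℝ => a1 / 2 * x ^ (e1 - e2)) atTop atTop :=
    (tendsto_rpow_atTop (by linarith)).const_mul_atTop (by linarith)
  filter_upwards [h3.eventually_ge_atTop a2, eventually_gt_atTop 0] with x hx hx0
  have hpow : x ^ e1 = x ^ (e1 - e2) * x ^ e2 := by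
    rw [← Real.rpow_add hx0, sub_add_cancel]
  have key : a2 * x ^ e2 ≤ a1 / 2 * x ^ e1 := by
    rw [hpow, ← mul_assoc]
    exact mul_le_mul_of_nonneg_right hx (Real.rpow_nonneg hx0.le e2)
  have : a1 * x ^ e1 = a1 / 2 * x ^ e1 + a1 / 2 * x ^ e1 := by ring
  linarith

private lemma aux2 {a1 a2 e1 e2 : ℝ} (ha1 : 0 < a1) (ha2 : 0 ≤ a2) (he1 : e1 < 0) (he : e1 < e2) :
    Tendsto (fun x : ℝ => a1 * x ^ e1 - a2 * x ^ e2) (𝓝[>] (0:ℝ)) atTop := by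
  have h2 : Tendsto (fun x : ℝ => a1 / 2 * x ^ e1) (𝓝[>] (0:ℝ)) atTop :=
    (rpow_tendsto_nhdsGT he1).const_mul_atTop (by linarith)
  refine tendsto_atTop_mono' _ ?_ h2
  have h3 : Tendsto (fun x : ℝ => a2 * x ^ (e2 - e1)) (𝓝[>] (0:ℝ)) (𝓝 0) := by
    simpa using (rpow_tendsto_zero (by linarith : (0:ℝ) < e2 - e1)).const_mul a2
  filter_upwards [h3.eventually (eventually_le_nhds (by linarith : (0:ℝ) < a1/2)),
    self_mem_nhdsWithin] with x hx (hx0 : 0 < x)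
  have hpow : x ^ e2 = x ^ (e2 - e1) * x ^ e1 := by
    rw [← Real.rpow_add hx0, sub_add_cancel]
  have key : a2 * x ^ e2 ≤ a1 / 2 * x ^ e1 := by
    rw [hpow, ← mul_assoc]
    exact mul_le_mul_of_nonneg_right hx (Real.rpow_nonneg hx0.le e1)
  have : a1 * x ^ e1 = a1 / 2 * x ^ e1 + a1 / 2 * x ^ e1 := by ring
  linarith

private lemma alg1 {a b K : ℝ} (nv : ℝ) (ha : 0 < a) (hb : 0 < b) (hK : 0 < K) (x y ζ ζ' : ℝ) :
    K⁻¹ * b ^ (-ζ - x) * nv * a ^ (ζ - ζ' + x - y) * (K * (b / a) ^ x * a ^ y)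
      = (a / b) ^ ζ * a ^ (-ζ') * nv := by
  have hba : ∀ z : ℝ, (b / a) ^ z = b ^ z * a ^ (-z) := fun z => by
    rw [Real.div_rpow hb.le ha.le, Real.rpow_neg ha.le, div_eq_mul_inv]
  have hab : ∀ z : ℝ, (a / b) ^ z = a ^ z * b ^ (-z) := fun z => by
    rw [Real.div_rpow ha.le hb.le, Real.rpow_neg hb.le, div_eq_mul_inv]
  calc K⁻¹ * b ^ (-ζ - x) * nv * a ^ (ζ - ζ' + x - y) * (K * (b / a) ^ x * a ^ y)
      = (K⁻¹ * K) * nv * (b ^ (-ζ - x) * b ^ x) * (a ^ (ζ - ζ' + x - y) * a ^ (-x) * a ^ y) := by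
        rw [hba]; ring
    _ = nv * b ^ (-ζ - x + x) * a ^ (ζ - ζ' + x - y + -x + y) := by
        rw [inv_mul_cancel₀ hK.ne', ← Real.rpow_add hb, ← Real.rpow_add ha, ← Real.rpow_add ha]
        ring
    _ = nv * b ^ (-ζ) * a ^ (ζ + -ζ') := by
        rw [show -ζ - x + x = -ζ by ring, show ζ - ζ' + x - y + -x + y = ζ + -ζ' by ring]
    _ = (a / b) ^ ζ * a ^ (-ζ') * nv := by
        rw [hab, Real.rpow_add ha]; ring

private lemma alg2 {a b K : ℝ} (nx : ℝ) (ha : 0 < a) (hb : 0 < b) (x w ζ ζ' : ℝ) :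
    (a / b) ^ ζ * a ^ (-ζ') * (K * (a / b) ^ x * b ^ w * nx)
      = K * b ^ (w - ζ - x) * nx * a ^ (ζ + x - ζ') := by
  have hab : ∀ z : ℝ, (a / b) ^ z = a ^ z * b ^ (-z) := fun z => by
    rw [Real.div_rpow ha.le hb.le, Real.rpow_neg hb.le, div_eq_mul_inv]
  calc (a / b) ^ ζ * a ^ (-ζ') * (K * (a / b) ^ x * b ^ w * nx)
      = K * nx * (b ^ (-ζ) * b ^ (-x) * b ^ w) * (a ^ ζ * a ^ (-ζ') * a ^ x) := by
        rw [hab, hab]; ring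
    _ = K * nx * b ^ (-ζ + -x + w) * a ^ (ζ + -ζ' + x) := by
        rw [← Real.rpow_add hb, ← Real.rpow_add hb, ← Real.rpow_add ha, ← Real.rpow_add ha]
    _ = K * b ^ (w - ζ - x) * nx * a ^ (ζ + x - ζ') := by
        rw [show -ζ + -x + w = w - ζ - x by ring, show ζ + -ζ' + x = ζ + x - ζ' by ring]; ring

set_option maxHeartbeats 1000000 in
private lemma key_both {n : ℕ} (μ : ℝ → ℝ) (Φ : ℝ → ℝ → Op n)
    (hμmono : StrictMono μ) (hμpos : ∀ t, 0 < μ t) (hμ0 : μ 0 = 1)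
    (hμtop : Tendsto μ atTop atTop) (hμbot : Tendsto μ atBot (𝓝 0))
    (hμc : Continuous μ)
    (hΦ1 : ∀ s, Φ s s = 1) (hΦc : ∀ t τ s, Φ t τ ∘L Φ τ s = Φ t s)
    (hΦcont : ∀ s ξ, Continuous fun t => Φ t s ξ)
    (ζ : ℝ) (P : ℝ → Op n) (K α β θ ν : ℝ)
    (hd : NuDWith μ (shiftEvo μ ζ Φ) P K α β θ ν)
    (ζ' : ℝ) (h1 : ζ + (α + θ) < ζ') (h2 : ζ' < ζ + (β - ν)) :
    Uset μ Φ ζ' = {p : ℝ × EuclideanSpace ℝ (Fin n) | P p.1 p.2 = p.2} ∧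
    Vset μ Φ ζ' = {p : ℝ × EuclideanSpace ℝ (Fin n) | P p.1 p.2 = 0} := by
  obtain ⟨hP, hcm, hK, hα, hβ, hθ, hν, hαθ, hβν, hb1, hb2⟩ := hd
  set Ψ := shiftEvo μ ζ Φ with hΨdef
  have hK0 : 0 < K := lt_of_lt_of_le one_pos hK
  have hμne : ∀ t, μ t ≠ 0 := fun t => (hμpos t).ne'
  have hnorm : ∀ t s (x : EuclideanSpace ℝ (Fin n)),
      ‖Φ t s x‖ = (μ t / μ s) ^ ζ * ‖Ψ t s x‖ := by
    intro t s x
    have hq : 0 < μ t / μ s := div_pos (hμpos t) (hμpos s)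
    have h : Ψ t s x = (μ t / μ s) ^ (-ζ) • Φ t s x := rfl
    rw [h, norm_smul, Real.norm_eq_abs, abs_of_pos (Real.rpow_pos_of_pos hq _), ← mul_assoc,
      ← Real.rpow_add hq, add_neg_cancel, Real.rpow_zero, one_mul]
  have hcoc : ∀ a b c (x : EuclideanSpace ℝ (Fin n)), Ψ a b (Ψ b c x) = Ψ a c x := by
    intro a b c x
    show (μ a / μ b) ^ (-ζ) • Φ a b ((μ b / μ c) ^ (-ζ) • Φ b c x)
      = (μ a / μ c) ^ (-ζ) • Φ a c x
    rw [map_smul, smul_smul,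
      ← Real.mul_rpow (div_pos (hμpos a) (hμpos b)).le (div_pos (hμpos b) (hμpos c)).le,
      show μ a / μ b * (μ b / μ c) = μ a / μ c by
        rw [div_mul_div_comm, mul_comm (μ a) (μ b), mul_div_mul_left _ _ (hμne b)]]
    congr 1
    calc Φ a b (Φ b c x) = (Φ a b ∘L Φ b c) x := rfl
      _ = Φ a c x := by rw [hΦc a b c]
  have hid : ∀ s (x : EuclideanSpace ℝ (Fin n)), Ψ s s x = x := by
    intro s x
    show (μ s / μ s) ^ (-ζ) • Φ s s x = x
    rw [div_self (hμne s), Real.one_rpow, one_smul, hΦ1 s]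
    rfl
  have hinv : ∀ s t (x : EuclideanSpace ℝ (Fin n)), Ψ s t (Ψ t s x) = x := fun s t x => by
    rw [hcoc, hid]
  have hPt : ∀ t (x : EuclideanSpace ℝ (Fin n)), P t (P t x) = P t x := by
    intro t x
    calc P t (P t x) = (P t ∘L P t) x := rfl
      _ = P t x := by rw [hP t]
  have hcmv : ∀ t s (x : EuclideanSpace ℝ (Fin n)), P t (Ψ t s x) = Ψ t s (P s x) := by
    intro t s x
    calc P t (Ψ t s x) = (P t ∘L Ψ t s) x := rfl
      _ = (Ψ t s ∘L P s) x := by rw [hcm t s]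
      _ = Ψ t s (P s x) := rfl
  have hub1 : ∀ t s (x : EuclideanSpace ℝ (Fin n)), s ≤ t →
      ‖Ψ t s (P s x)‖ ≤ K * (μ t / μ s) ^ α * μ s ^ (Real.sign s * θ) * ‖x‖ := by
    intro t s x hst
    calc ‖Ψ t s (P s x)‖ = ‖(Ψ t s ∘L P s) x‖ := rfl
      _ ≤ ‖Ψ t s ∘L P s‖ * ‖x‖ := ContinuousLinearMap.le_opNorm _ x
      _ ≤ _ := mul_le_mul_of_nonneg_right (hb1 t s hst) (norm_nonneg x)
  have hub2 : ∀ t s (x : EuclideanSpace ℝ (Fin n)), t ≤ s →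
      ‖Ψ t s (x - P s x)‖ ≤ K * (μ t / μ s) ^ β * μ s ^ (Real.sign s * ν) * ‖x‖ := by
    intro t s x hts
    have hx : x - P s x = (1 - P s) x := by
      simp [ContinuousLinearMap.sub_apply]
    calc ‖Ψ t s (x - P s x)‖ = ‖(Ψ t s ∘L (1 - P s)) x‖ := by rw [hx]; rfl
      _ ≤ ‖Ψ t s ∘L (1 - P s)‖ * ‖x‖ := ContinuousLinearMap.le_opNorm _ x
      _ ≤ _ := mul_le_mul_of_nonneg_right (hb2 t s hts) (norm_nonneg x)
  have hlb2 : ∀ t s (x : EuclideanSpace ℝ (Fin n)), s ≤ t → P s x = 0 →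
      ‖x‖ ≤ K * (μ s / μ t) ^ β * μ t ^ (Real.sign t * ν) * ‖Ψ t s x‖ := by
    intro t s x hst hker
    have h1 : (1 - P t) (Ψ t s x) = Ψ t s x := by
      simp [ContinuousLinearMap.sub_apply, hcmv, hker]
    calc ‖x‖ = ‖Ψ s t ((1 - P t) (Ψ t s x))‖ := by rw [h1, hinv]
      _ = ‖(Ψ s t ∘L (1 - P t)) (Ψ t s x)‖ := rfl
      _ ≤ ‖Ψ s t ∘L (1 - P t)‖ * ‖Ψ t s x‖ := ContinuousLinearMap.le_opNorm _ _
      _ ≤ _ := mul_le_mul_of_nonneg_right (hb2 s t hst) (norm_nonneg _)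
  have hlb1 : ∀ t s (x : EuclideanSpace ℝ (Fin n)), t ≤ s → P s x = x →
      ‖x‖ ≤ K * (μ s / μ t) ^ α * μ t ^ (Real.sign t * θ) * ‖Ψ t s x‖ := by
    intro t s x hts hx
    have h1 : P t (Ψ t s x) = Ψ t s x := by rw [hcmv, hx]
    calc ‖x‖ = ‖Ψ s t (P t (Ψ t s x))‖ := by rw [h1, hinv]
      _ = ‖(Ψ s t ∘L P t) (Ψ t s x)‖ := rfl
      _ ≤ ‖Ψ s t ∘L P t‖ * ‖Ψ t s x‖ := ContinuousLinearMap.le_opNorm _ _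
      _ ≤ _ := mul_le_mul_of_nonneg_right (hb1 s t hts) (norm_nonneg _)
  have hFc : ∀ s (ξ : EuclideanSpace ℝ (Fin n)),
      Continuous fun t => ‖Φ t s ξ‖ * μ t ^ (-ζ') :=
    fun s ξ => (hΦcont s ξ).norm.mul (hμc.rpow_const fun t => Or.inl (hμne t))
  constructor
  · -- U part
    ext ⟨s, ξ⟩
    simp only [Uset, Set.mem_setOf_eq]
    constructor
    · rintro ⟨C, hC⟩
      by_contra hne
      set v := ξ - P s ξ with hvdef
      have hv0 : v ≠ 0 := by
        intro h
        exact hne (sub_eq_zero.mp h).symm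
      have hPv : P s v = 0 := by
        simp [hvdef, map_sub, hPt]
      have hnv : 0 < ‖v‖ := norm_pos_iff.mpr hv0
      have hbs0 : 0 < μ s := hμpos s
      have ha1 : 0 < K⁻¹ * μ s ^ (-ζ - β) * ‖v‖ :=
        mul_pos (mul_pos (inv_pos.mpr hK0) (Real.rpow_pos_of_pos hbs0 _)) hnv
      have ha2 : 0 ≤ K * μ s ^ (Real.sign s * θ - ζ - α) * ‖ξ‖ :=
        mul_nonneg (mul_nonneg hK0.le (Real.rpow_pos_of_pos hbs0 _).le) (norm_nonneg _)
      have hkey : ∀ t, s ≤ t → 0 < t →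
          K⁻¹ * μ s ^ (-ζ - β) * ‖v‖ * μ t ^ (ζ - ζ' + β - ν)
            - K * μ s ^ (Real.sign s * θ - ζ - α) * ‖ξ‖ * μ t ^ (ζ + α - ζ')
          ≤ ‖Φ t s ξ‖ * μ t ^ (-ζ') := by
        intro t hst ht
        have hsgn : Real.sign t = 1 := Real.sign_of_pos ht
        have hat : 0 < μ t := hμpos t
        have hbs : 0 < μ s := hμpos s
        have hc : (0:ℝ) < (μ t / μ s) ^ ζ * μ t ^ (-ζ') :=
          mul_pos (Real.rpow_pos_of_pos (div_pos (hμpos t) (hμpos s)) _)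
            (Real.rpow_pos_of_pos (hμpos t) _)
        have hF : ‖Φ t s ξ‖ * μ t ^ (-ζ') = (μ t / μ s) ^ ζ * μ t ^ (-ζ') * ‖Ψ t s ξ‖ := by
          rw [hnorm]; ring
        -- split
        have hsplit : ‖Ψ t s v‖ ≤ ‖Ψ t s ξ‖ + ‖Ψ t s (P s ξ)‖ := by
          have : Ψ t s v = Ψ t s ξ - Ψ t s (P s ξ) := by rw [hvdef, map_sub]
          rw [this]; exact norm_sub_le _ _
        -- lower bound for the v-part
        have hD : 0 < K * (μ s / μ t) ^ β * μ t ^ ((1:ℝ) * ν) :=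
          mul_pos (mul_pos hK0 (Real.rpow_pos_of_pos (div_pos (hμpos s) (hμpos t)) _))
            (Real.rpow_pos_of_pos (hμpos t) _)
        have hlb := hlb2 t s v hst hPv
        rw [hsgn] at hlb
        have hA : K⁻¹ * μ s ^ (-ζ - β) * ‖v‖ * μ t ^ (ζ - ζ' + β - ν)
            ≤ (μ t / μ s) ^ ζ * μ t ^ (-ζ') * ‖Ψ t s v‖ := by
          have step : (μ t / μ s) ^ ζ * μ t ^ (-ζ') * ‖v‖
              ≤ ((μ t / μ s) ^ ζ * μ t ^ (-ζ') * ‖Ψ t s v‖) * (K * (μ s / μ t) ^ β * μ t ^ ((1:ℝ) * ν)) := by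
            calc (μ t / μ s) ^ ζ * μ t ^ (-ζ') * ‖v‖
                ≤ (μ t / μ s) ^ ζ * μ t ^ (-ζ')
                  * (K * (μ s / μ t) ^ β * μ t ^ ((1:ℝ) * ν) * ‖Ψ t s v‖) :=
                  mul_le_mul_of_nonneg_left hlb hc.le
              _ = ((μ t / μ s) ^ ζ * μ t ^ (-ζ') * ‖Ψ t s v‖)
                  * (K * (μ s / μ t) ^ β * μ t ^ ((1:ℝ) * ν)) := by ring
          refine le_of_mul_le_mul_right ?_ hD
          calc K⁻¹ * μ s ^ (-ζ - β) * ‖v‖ * μ t ^ (ζ - ζ' + β - ν)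
                  * (K * (μ s / μ t) ^ β * μ t ^ ((1:ℝ) * ν))
                = (μ t / μ s) ^ ζ * μ t ^ (-ζ') * ‖v‖ := by
                  rw [show ζ - ζ' + β - ν = ζ - ζ' + β - (1:ℝ) * ν by ring]
                  exact alg1 ‖v‖ hat hbs hK0 β ((1:ℝ) * ν) ζ ζ'
              _ ≤ ((μ t / μ s) ^ ζ * μ t ^ (-ζ') * ‖Ψ t s v‖)
                  * (K * (μ s / μ t) ^ β * μ t ^ ((1:ℝ) * ν)) := step
        -- upper bound for the P-part
        have hB : (μ t / μ s) ^ ζ * μ t ^ (-ζ') * ‖Ψ t s (P s ξ)‖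
            ≤ K * μ s ^ (Real.sign s * θ - ζ - α) * ‖ξ‖ * μ t ^ (ζ + α - ζ') := by
          calc (μ t / μ s) ^ ζ * μ t ^ (-ζ') * ‖Ψ t s (P s ξ)‖
              ≤ (μ t / μ s) ^ ζ * μ t ^ (-ζ')
                * (K * (μ t / μ s) ^ α * μ s ^ (Real.sign s * θ) * ‖ξ‖) :=
                mul_le_mul_of_nonneg_left (hub1 t s ξ hst) hc.le
            _ = K * μ s ^ (Real.sign s * θ - ζ - α) * ‖ξ‖ * μ t ^ (ζ + α - ζ') :=
                alg2 ‖ξ‖ hat hbs α (Real.sign s * θ) ζ ζ'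
        have hsplit2 := mul_le_mul_of_nonneg_left hsplit hc.le
        rw [mul_add] at hsplit2
        rw [hF]
        linarith
      -- now get a contradiction
      have htend : Tendsto (fun t => K⁻¹ * μ s ^ (-ζ - β) * ‖v‖ * μ t ^ (ζ - ζ' + β - ν)
          - K * μ s ^ (Real.sign s * θ - ζ - α) * ‖ξ‖ * μ t ^ (ζ + α - ζ')) atTop atTop := by
        exact (aux1 ha1 ha2 (by linarith) (by linarith)).comp hμtop
      obtain ⟨t, hgt, hts⟩ :=
        ((htend.eventually_gt_atTop C).and (eventually_ge_atTop (max s 1))).exists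
      have hst : s ≤ t := le_trans (le_max_left _ _) hts
      have ht0 : (0:ℝ) < t := lt_of_lt_of_le one_pos (le_trans (le_max_right _ _) hts)
      have := hkey t hst ht0
      have := hC t ht0.le
      linarith
    · intro hPs
      -- P s ξ = ξ ; produce the bound
      have hbs : 0 < μ s := hμpos s
      have hboundfar : ∀ t, s ≤ t → 0 ≤ t →
          ‖Φ t s ξ‖ * μ t ^ (-ζ') ≤ K * μ s ^ (Real.sign s * θ - ζ - α) * ‖ξ‖ := by
        intro t hst ht0
        have hat : 0 < μ t := hμpos t
        have hc : (0:ℝ) < (μ t / μ s) ^ ζ * μ t ^ (-ζ') :=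
          mul_pos (Real.rpow_pos_of_pos (div_pos (hμpos t) (hμpos s)) _)
            (Real.rpow_pos_of_pos (hμpos t) _)
        have hF : ‖Φ t s ξ‖ * μ t ^ (-ζ') = (μ t / μ s) ^ ζ * μ t ^ (-ζ') * ‖Ψ t s ξ‖ := by
          rw [hnorm]; ring
        have hμt1 : (1:ℝ) ≤ μ t := by
          rw [← hμ0]; exact hμmono.monotone ht0
        have h1 : ‖Ψ t s ξ‖ = ‖Ψ t s (P s ξ)‖ := by rw [hPs]
        calc ‖Φ t s ξ‖ * μ t ^ (-ζ')
            = (μ t / μ s) ^ ζ * μ t ^ (-ζ') * ‖Ψ t s (P s ξ)‖ := by rw [hF, h1]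
          _ ≤ (μ t / μ s) ^ ζ * μ t ^ (-ζ')
              * (K * (μ t / μ s) ^ α * μ s ^ (Real.sign s * θ) * ‖ξ‖) :=
              mul_le_mul_of_nonneg_left (hub1 t s ξ hst) hc.le
          _ = K * μ s ^ (Real.sign s * θ - ζ - α) * ‖ξ‖ * μ t ^ (ζ + α - ζ') :=
              alg2 ‖ξ‖ hat hbs α (Real.sign s * θ) ζ ζ'
          _ ≤ K * μ s ^ (Real.sign s * θ - ζ - α) * ‖ξ‖ * 1 := by
              apply mul_le_mul_of_nonneg_left
              · exact Real.rpow_le_one_of_one_le_of_nonpos hμt1 (by linarith)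
              · exact mul_nonneg (mul_nonneg hK0.le (Real.rpow_pos_of_pos hbs _).le)
                  (norm_nonneg _)
          _ = K * μ s ^ (Real.sign s * θ - ζ - α) * ‖ξ‖ := by ring
      obtain ⟨C2, hC2⟩ :=
        (isCompact_Icc.image_of_continuousOn ((hFc s ξ).continuousOn)).bddAbove
      refine ⟨max (K * μ s ^ (Real.sign s * θ - ζ - α) * ‖ξ‖) C2, fun t ht0 => ?_⟩
      rcases le_total t (max s 0) with hcase | hcase
      · exact le_max_of_le_right (hC2 (Set.mem_image_of_mem _ ⟨ht0, hcase⟩))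
      · exact le_max_of_le_left
          (hboundfar t (le_trans (le_max_left _ _) hcase) ht0)
  · -- V part
    ext ⟨s, ξ⟩
    simp only [Vset, Set.mem_setOf_eq]
    constructor
    · rintro ⟨C, hC⟩
      by_contra hne
      set u := P s ξ with hudef
      have hu0 : u ≠ 0 := hne
      have hPu : P s u = u := hPt s ξ
      have hnu : 0 < ‖u‖ := norm_pos_iff.mpr hu0
      have hbs : 0 < μ s := hμpos s
      have ha1 : 0 < K⁻¹ * μ s ^ (-ζ - α) * ‖u‖ :=
        mul_pos (mul_pos (inv_pos.mpr hK0) (Real.rpow_pos_of_pos hbs _)) hnu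
      have ha2 : 0 ≤ K * μ s ^ (Real.sign s * ν - ζ - β) * ‖ξ‖ :=
        mul_nonneg (mul_nonneg hK0.le (Real.rpow_pos_of_pos hbs _).le) (norm_nonneg _)
      have hkey : ∀ t, t ≤ s → t < 0 →
          K⁻¹ * μ s ^ (-ζ - α) * ‖u‖ * μ t ^ (ζ - ζ' + α + θ)
            - K * μ s ^ (Real.sign s * ν - ζ - β) * ‖ξ‖ * μ t ^ (ζ + β - ζ')
          ≤ ‖Φ t s ξ‖ * μ t ^ (-ζ') := by
        intro t hts ht
        have hsgn : Real.sign t = -1 := Real.sign_of_neg ht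
        have hat : 0 < μ t := hμpos t
        have hc : (0:ℝ) < (μ t / μ s) ^ ζ * μ t ^ (-ζ') :=
          mul_pos (Real.rpow_pos_of_pos (div_pos (hμpos t) (hμpos s)) _)
            (Real.rpow_pos_of_pos (hμpos t) _)
        have hF : ‖Φ t s ξ‖ * μ t ^ (-ζ') = (μ t / μ s) ^ ζ * μ t ^ (-ζ') * ‖Ψ t s ξ‖ := by
          rw [hnorm]; ring
        have hsplit : ‖Ψ t s u‖ ≤ ‖Ψ t s ξ‖ + ‖Ψ t s (ξ - P s ξ)‖ := by
          have : Ψ t s u = Ψ t s ξ - Ψ t s (ξ - P s ξ) := by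
            rw [← map_sub, hudef, sub_sub_cancel]
          rw [this]; exact norm_sub_le _ _
        have hD : 0 < K * (μ s / μ t) ^ α * μ t ^ ((-1:ℝ) * θ) :=
          mul_pos (mul_pos hK0 (Real.rpow_pos_of_pos (div_pos (hμpos s) (hμpos t)) _))
            (Real.rpow_pos_of_pos (hμpos t) _)
        have hlb := hlb1 t s u hts hPu
        rw [hsgn] at hlb
        have hA : K⁻¹ * μ s ^ (-ζ - α) * ‖u‖ * μ t ^ (ζ - ζ' + α + θ)
            ≤ (μ t / μ s) ^ ζ * μ t ^ (-ζ') * ‖Ψ t s u‖ := by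
          have step : (μ t / μ s) ^ ζ * μ t ^ (-ζ') * ‖u‖
              ≤ ((μ t / μ s) ^ ζ * μ t ^ (-ζ') * ‖Ψ t s u‖)
                * (K * (μ s / μ t) ^ α * μ t ^ ((-1:ℝ) * θ)) := by
            calc (μ t / μ s) ^ ζ * μ t ^ (-ζ') * ‖u‖
                ≤ (μ t / μ s) ^ ζ * μ t ^ (-ζ')
                  * (K * (μ s / μ t) ^ α * μ t ^ ((-1:ℝ) * θ) * ‖Ψ t s u‖) :=
                  mul_le_mul_of_nonneg_left hlb hc.le
              _ = ((μ t / μ s) ^ ζ * μ t ^ (-ζ') * ‖Ψ t s u‖)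
                  * (K * (μ s / μ t) ^ α * μ t ^ ((-1:ℝ) * θ)) := by ring
          refine le_of_mul_le_mul_right ?_ hD
          calc K⁻¹ * μ s ^ (-ζ - α) * ‖u‖ * μ t ^ (ζ - ζ' + α + θ)
                  * (K * (μ s / μ t) ^ α * μ t ^ ((-1:ℝ) * θ))
                = (μ t / μ s) ^ ζ * μ t ^ (-ζ') * ‖u‖ := by
                  rw [show ζ - ζ' + α + θ = ζ - ζ' + α - (-1:ℝ) * θ by ring]
                  exact alg1 ‖u‖ hat hbs hK0 α ((-1:ℝ) * θ) ζ ζ'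
              _ ≤ ((μ t / μ s) ^ ζ * μ t ^ (-ζ') * ‖Ψ t s u‖)
                  * (K * (μ s / μ t) ^ α * μ t ^ ((-1:ℝ) * θ)) := step
        have hB : (μ t / μ s) ^ ζ * μ t ^ (-ζ') * ‖Ψ t s (ξ - P s ξ)‖
            ≤ K * μ s ^ (Real.sign s * ν - ζ - β) * ‖ξ‖ * μ t ^ (ζ + β - ζ') := by
          calc (μ t / μ s) ^ ζ * μ t ^ (-ζ') * ‖Ψ t s (ξ - P s ξ)‖
              ≤ (μ t / μ s) ^ ζ * μ t ^ (-ζ')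
                * (K * (μ t / μ s) ^ β * μ s ^ (Real.sign s * ν) * ‖ξ‖) :=
                mul_le_mul_of_nonneg_left (hub2 t s ξ hts) hc.le
            _ = K * μ s ^ (Real.sign s * ν - ζ - β) * ‖ξ‖ * μ t ^ (ζ + β - ζ') :=
                alg2 ‖ξ‖ hat hbs β (Real.sign s * ν) ζ ζ'
        have hsplit2 := mul_le_mul_of_nonneg_left hsplit hc.le
        rw [mul_add] at hsplit2
        rw [hF]
        linarith
      have hμbot' : Tendsto μ atBot (𝓝[>] (0:ℝ)) :=
        tendsto_nhdsWithin_of_tendsto_nhds_of_eventually_within μ hμbot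
          (Eventually.of_forall fun t => hμpos t)
      have htend : Tendsto (fun t => K⁻¹ * μ s ^ (-ζ - α) * ‖u‖ * μ t ^ (ζ - ζ' + α + θ)
          - K * μ s ^ (Real.sign s * ν - ζ - β) * ‖ξ‖ * μ t ^ (ζ + β - ζ')) atBot atTop :=
        (aux2 ha1 ha2 (by linarith) (by linarith)).comp hμbot'
      obtain ⟨t, hgt, hts⟩ :=
        ((htend.eventually_gt_atTop C).and (eventually_le_atBot (min s (-1)))).exists
      have hts' : t ≤ s := le_trans hts (min_le_left _ _)
      have ht0 : t < 0 := lt_of_le_of_lt (le_trans hts (min_le_right _ _)) (by norm_num)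
      have := hkey t hts' ht0
      have := hC t ht0.le
      linarith
    · intro hPs
      have hbs : 0 < μ s := hμpos s
      have hxi : ξ - P s ξ = ξ := by rw [hPs, sub_zero]
      have hboundfar : ∀ t, t ≤ s → t ≤ 0 →
          ‖Φ t s ξ‖ * μ t ^ (-ζ') ≤ K * μ s ^ (Real.sign s * ν - ζ - β) * ‖ξ‖ := by
        intro t hts ht0
        have hat : 0 < μ t := hμpos t
        have hc : (0:ℝ) < (μ t / μ s) ^ ζ * μ t ^ (-ζ') :=
          mul_pos (Real.rpow_pos_of_pos (div_pos (hμpos t) (hμpos s)) _)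
            (Real.rpow_pos_of_pos (hμpos t) _)
        have hF : ‖Φ t s ξ‖ * μ t ^ (-ζ') = (μ t / μ s) ^ ζ * μ t ^ (-ζ') * ‖Ψ t s ξ‖ := by
          rw [hnorm]; ring
        have hμt1 : μ t ≤ 1 := by
          rw [← hμ0]; exact hμmono.monotone ht0
        have h1 : ‖Ψ t s ξ‖ = ‖Ψ t s (ξ - P s ξ)‖ := by rw [hxi]
        calc ‖Φ t s ξ‖ * μ t ^ (-ζ')
            = (μ t / μ s) ^ ζ * μ t ^ (-ζ') * ‖Ψ t s (ξ - P s ξ)‖ := by rw [hF, h1]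
          _ ≤ (μ t / μ s) ^ ζ * μ t ^ (-ζ')
              * (K * (μ t / μ s) ^ β * μ s ^ (Real.sign s * ν) * ‖ξ‖) :=
              mul_le_mul_of_nonneg_left (hub2 t s ξ hts) hc.le
          _ = K * μ s ^ (Real.sign s * ν - ζ - β) * ‖ξ‖ * μ t ^ (ζ + β - ζ') :=
              alg2 ‖ξ‖ hat hbs β (Real.sign s * ν) ζ ζ'
          _ ≤ K * μ s ^ (Real.sign s * ν - ζ - β) * ‖ξ‖ * 1 := by
              apply mul_le_mul_of_nonneg_left
              · exact Real.rpow_le_one hat.le hμt1 (by linarith)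
              · exact mul_nonneg (mul_nonneg hK0.le (Real.rpow_pos_of_pos hbs _).le)
                  (norm_nonneg _)
          _ = K * μ s ^ (Real.sign s * ν - ζ - β) * ‖ξ‖ := by ring
      obtain ⟨C2, hC2⟩ :=
        (isCompact_Icc.image_of_continuousOn ((hFc s ξ).continuousOn)).bddAbove
      refine ⟨max (K * μ s ^ (Real.sign s * ν - ζ - β) * ‖ξ‖) C2, fun t ht0 => ?_⟩
      rcases le_total (min s 0) t with hcase | hcase
      · exact le_max_of_le_right (hC2 (Set.mem_image_of_mem _ ⟨hcase, ht0⟩))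
      · exact le_max_of_le_left
          (hboundfar t (le_trans hcase (min_le_left _ _)) ht0)

private lemma key_local {n : ℕ} (μ : ℝ → ℝ) (Φ : ℝ → ℝ → Op n)
    (hμmono : StrictMono μ) (hμpos : ∀ t, 0 < μ t) (hμ0 : μ 0 = 1)
    (hμtop : Tendsto μ atTop atTop) (hμbot : Tendsto μ atBot (𝓝 0))
    (hμc : Continuous μ)
    (hΦ1 : ∀ s, Φ s s = 1) (hΦc : ∀ t τ s, Φ t τ ∘L Φ τ s = Φ t s)
    (hΦcont : ∀ s ξ, Continuous fun t => Φ t s ξ)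
    {ζ : ℝ} (hζ : ζ ∈ resolventND μ Φ) :
    ∃ ε > 0, ∀ ζ', |ζ' - ζ| ≤ ε →
      Uset μ Φ ζ' = Uset μ Φ ζ ∧ Vset μ Φ ζ' = Vset μ Φ ζ := by
  obtain ⟨P, K, α, β, θ, ν, hd⟩ := hζ
  have hαθ : α + θ < 0 := hd.2.2.2.2.2.2.2.1
  have hβν : 0 < β - ν := hd.2.2.2.2.2.2.2.2.1
  refine ⟨min (-(α + θ)) (β - ν) / 2, half_pos (lt_min (by linarith) hβν), ?_⟩
  intro ζ' hζ'
  have hmin1 : min (-(α + θ)) (β - ν) ≤ -(α + θ) := min_le_left _ _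
  have hmin2 : min (-(α + θ)) (β - ν) ≤ β - ν := min_le_right _ _
  have habs := abs_le.mp hζ'
  have hwin1 : ζ + (α + θ) < ζ' := by linarith
  have hwin2 : ζ' < ζ + (β - ν) := by linarith
  have h1 := key_both μ Φ hμmono hμpos hμ0 hμtop hμbot hμc hΦ1 hΦc hΦcont ζ P K α β θ ν hd
    ζ' hwin1 hwin2
  have h2 := key_both μ Φ hμmono hμpos hμ0 hμtop hμbot hμc hΦ1 hΦc hΦcont ζ P K α β θ ν hd
    ζ (by linarith) (by linarith)
  exact ⟨h1.1.trans h2.1.symm, h1.2.trans h2.2.symm⟩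

private lemma interval_const {n : ℕ} (μ : ℝ → ℝ) (Φ : ℝ → ℝ → Op n)
    (hμmono : StrictMono μ) (hμpos : ∀ t, 0 < μ t) (hμ0 : μ 0 = 1)
    (hμtop : Tendsto μ atTop atTop) (hμbot : Tendsto μ atBot (𝓝 0))
    (hμc : Continuous μ)
    (hΦ1 : ∀ s, Φ s s = 1) (hΦc : ∀ t τ s, Φ t τ ∘L Φ τ s = Φ t s)
    (hΦcont : ∀ s ξ, Continuous fun t => Φ t s ξ)
    (a b : ℝ) (hab : a ≤ b) (hsub : Set.Icc a b ⊆ resolventND μ Φ) :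
    Uset μ Φ b = Uset μ Φ a ∧ Vset μ Φ b = Vset μ Φ a := by
  set T := {x : ℝ | x ∈ Set.Icc a b ∧ Uset μ Φ x = Uset μ Φ a ∧ Vset μ Φ x = Vset μ Φ a}
    with hT
  have haT : a ∈ T := ⟨⟨le_refl a, hab⟩, rfl, rfl⟩
  have hTne : T.Nonempty := ⟨a, haT⟩
  have hTbdd : BddAbove T := ⟨b, fun x hx => hx.1.2⟩
  set c := sSup T with hc
  have hcmem : c ∈ Set.Icc a b := ⟨le_csSup hTbdd haT, csSup_le hTne fun x hx => hx.1.2⟩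
  obtain ⟨ε, hε, hloc⟩ := key_local μ Φ hμmono hμpos hμ0 hμtop hμbot hμc hΦ1 hΦc hΦcont
    (hsub hcmem)
  have hcT : Uset μ Φ c = Uset μ Φ a ∧ Vset μ Φ c = Vset μ Φ a := by
    obtain ⟨x, hxT, hxc⟩ := exists_lt_of_lt_csSup hTne (by linarith : c - ε < c)
    have hxle : x ≤ c := le_csSup hTbdd hxT
    have h := hloc x (by rw [abs_le]; constructor <;> linarith)
    exact ⟨h.1.symm.trans hxT.2.1, h.2.symm.trans hxT.2.2⟩
  rcases eq_or_lt_of_le hcmem.2 with hcb | hcb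
  · rw [← hcb]; exact hcT
  · exfalso
    have h1 : c ≤ min b (c + ε) := le_min hcb.le (by linarith)
    have h2 : min b (c + ε) ≤ c + ε := min_le_right _ _
    have h := hloc (min b (c + ε)) (by rw [abs_le]; constructor <;> linarith)
    have hc'T : min b (c + ε) ∈ T :=
      ⟨⟨le_trans hcmem.1 h1, min_le_left _ _⟩, h.1.trans hcT.1, h.2.trans hcT.2⟩
    have hle : min b (c + ε) ≤ c := le_csSup hTbdd hc'T
    have hlt : c < min b (c + ε) := lt_min hcb (by linarith)
    linarith

/-- constancy of U and V over an interval of the resolvent set. -/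
theorem stmt8 (n : ℕ) (A : ℝ → Op n) (hA : Continuous A)
    (Φ : ℝ → ℝ → Op n) (hΦ : IsEvolutionOp A Φ)
    (μ : ℝ → ℝ) (hgr : GrowthRate μ) (hdiff : Differentiable ℝ μ)
    (J : Set ℝ) (hJ : J.OrdConnected) (hJρ : J ⊆ resolventND μ Φ)
    (γ : ℝ) (hγ : γ ∈ J) :
    ∀ η ∈ J, Uset μ Φ η = Uset μ Φ γ ∧ Vset μ Φ η = Vset μ Φ γ := by
  obtain ⟨hμmono, hμpos, hμ0, hμtop, hμbot⟩ := hgr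
  have hμc : Continuous μ := hdiff.continuous
  have hΦ1 : ∀ s, Φ s s = 1 := hΦ.1
  have hΦc : ∀ t τ s, Φ t τ ∘L Φ τ s = Φ t s := hΦ.2.1
  have hΦcont : ∀ s ξ, Continuous fun t => Φ t s ξ := by
    intro s ξ
    have hop : Continuous fun t => Φ t s := by
      rw [continuous_iff_continuousAt]
      intro t
      exact (hΦ.2.2 s t).continuousAt
    exact hop.clm_apply continuous_const
  intro η hη
  rcases le_total γ η with hle | hle
  · have hsub : Set.Icc γ η ⊆ resolventND μ Φ := fun x hx => hJρ (hJ.out hγ hη hx)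
    exact interval_const μ Φ hμmono hμpos hμ0 hμtop hμbot hμc hΦ1 hΦc hΦcont γ η hle hsub
  · have hsub : Set.Icc η γ ⊆ resolventND μ Φ := fun x hx => hJρ (hJ.out hη hγ hx)
    have h := interval_const μ Φ hμmono hμpos hμ0 hμtop hμbot hμc hΦ1 hΦc hΦcont η γ hle hsub
    exact ⟨h.1.symm, h.2.symm⟩
end
end

section
/- If γ₁ < γ₂, both shifted systems x' = (A(t) − γᵢ μ'(t)/μ(t) I)x admit nonuniform μ-dichotomies with the same invariant projection P(t) (with constants Kᵢ, αᵢ < 0, βᵢ > 0, θᵢ, νᵢ ≥ 0, αᵢ+θᵢ < 0, βᵢ−νᵢ > 0), then for every γ ∈ [γ₁, γ₂] the shifted system x' = (A(t) − γ μ'(t)/μ(t) I)x admits a nonuniform μ-dichotomy with projection P and constants K = max{K₁,K₂}, α₁, β₂, θ₁, ν₂. In particular [γ₁, γ₂] ⊆ ρ^{ND}_μ(A). -/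
open Filter Topology

noncomputable section

/-- common projection at γ₁ < γ₂ gives a nonuniform μ-dichotomy with
constants max{K₁,K₂}, α₁, β₂, θ₁, ν₂ at every γ ∈ [γ₁,γ₂]; hence [γ₁,γ₂] ⊆ ρ^{ND}_μ(A). -/
theorem stmt10 (n : ℕ) (A : ℝ → Op n) (hA : Continuous A)
    (Φ : ℝ → ℝ → Op n) (hΦ : IsEvolutionOp A Φ)
    (μ : ℝ → ℝ) (hgr : GrowthRate μ) (hdiff : Differentiable ℝ μ)
    (γ₁ γ₂ : ℝ) (hlt : γ₁ < γ₂) (P : ℝ → Op n)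
    (K₁ α₁ β₁ θ₁ ν₁ K₂ α₂ β₂ θ₂ ν₂ : ℝ)
    (h1 : NuDWith μ (shiftEvo μ γ₁ Φ) P K₁ α₁ β₁ θ₁ ν₁)
    (h2 : NuDWith μ (shiftEvo μ γ₂ Φ) P K₂ α₂ β₂ θ₂ ν₂) :
    (∀ γ ∈ Set.Icc γ₁ γ₂, NuDWith μ (shiftEvo μ γ Φ) P (max K₁ K₂) α₁ β₂ θ₁ ν₂) ∧
    Set.Icc γ₁ γ₂ ⊆ resolventND μ Φ := by
  obtain ⟨hP1, hC1, hK1, hα1, hβ1, hθ1, hν1, hαθ1, hβν1, hS1, hU1⟩ := h1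
  obtain ⟨hP2, hC2, hK2, hα2, hβ2, hθ2, hν2, hαθ2, hβν2, hS2, hU2⟩ := h2
  have hμpos := hgr.2.1
  have main : ∀ γ ∈ Set.Icc γ₁ γ₂, NuDWith μ (shiftEvo μ γ Φ) P (max K₁ K₂) α₁ β₂ θ₁ ν₂ := by
    rintro γ ⟨hγ1, hγ2⟩
    have hrdiv : ∀ t s : ℝ, (0:ℝ) < μ t / μ s := fun t s => div_pos (hμpos t) (hμpos s)
    have hcomm : ∀ t s, P t ∘L Φ t s = Φ t s ∘L P s := by
      intro t s
      have h := hC1 t s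
      have hr : (0:ℝ) < (μ t / μ s) ^ (-γ₁) := Real.rpow_pos_of_pos (hrdiv t s) _
      have h' : ((μ t / μ s) ^ (-γ₁)) • (P t ∘L Φ t s)
          = ((μ t / μ s) ^ (-γ₁)) • (Φ t s ∘L P s) := by
        simpa [shiftEvo, ContinuousLinearMap.comp_smul, ContinuousLinearMap.smul_comp] using h
      exact smul_right_injective _ hr.ne' h'
    have key : ∀ (γ' : ℝ) (t s : ℝ), shiftEvo μ γ Φ t s
        = ((μ t / μ s) ^ (γ' - γ)) • shiftEvo μ γ' Φ t s := by
      intro γ' t s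
      simp only [shiftEvo, smul_smul]
      rw [← Real.rpow_add (hrdiv t s)]
      congr 1
      ring
    refine ⟨hP1, ?_, le_trans hK1 (le_max_left _ _), hα1, hβ2, hθ1, hν2, hαθ1, hβν2, ?_, ?_⟩
    · intro t s
      simp [shiftEvo, ContinuousLinearMap.comp_smul, ContinuousLinearMap.smul_comp, hcomm t s]
    · intro t s hst
      have hr1 : (1:ℝ) ≤ μ t / μ s := (one_le_div (hμpos s)).2 (hgr.1.monotone hst)
      rw [key γ₁ t s, ContinuousLinearMap.smul_comp]
      have hns : ‖(μ t / μ s) ^ (γ₁ - γ) • (shiftEvo μ γ₁ Φ t s ∘L P s)‖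
          = (μ t / μ s) ^ (γ₁ - γ) * ‖shiftEvo μ γ₁ Φ t s ∘L P s‖ := by
        have h := norm_smul ((μ t / μ s) ^ (γ₁ - γ)) (shiftEvo μ γ₁ Φ t s ∘L P s)
        rwa [Real.norm_eq_abs, abs_of_pos (Real.rpow_pos_of_pos (hrdiv t s) _)] at h
      calc ‖(μ t / μ s) ^ (γ₁ - γ) • (shiftEvo μ γ₁ Φ t s ∘L P s)‖
          = (μ t / μ s) ^ (γ₁ - γ) * ‖shiftEvo μ γ₁ Φ t s ∘L P s‖ := hns
        _ ≤ 1 * (K₁ * (μ t / μ s) ^ α₁ * μ s ^ (Real.sign s * θ₁)) := by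
            apply mul_le_mul
            · exact Real.rpow_le_one_of_one_le_of_nonpos hr1 (by linarith)
            · exact hS1 t s hst
            · exact norm_nonneg _
            · exact zero_le_one
        _ = K₁ * (μ t / μ s) ^ α₁ * μ s ^ (Real.sign s * θ₁) := one_mul _
        _ ≤ max K₁ K₂ * (μ t / μ s) ^ α₁ * μ s ^ (Real.sign s * θ₁) := by
            refine mul_le_mul_of_nonneg_right (mul_le_mul_of_nonneg_right
              (le_max_left _ _) ?_) ?_
            · exact (Real.rpow_pos_of_pos (hrdiv t s) _).le
            · exact (Real.rpow_pos_of_pos (hμpos s) _).le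
    · intro t s hts
      have hr1 : μ t / μ s ≤ 1 := (div_le_one (hμpos s)).2 (hgr.1.monotone hts)
      rw [key γ₂ t s, ContinuousLinearMap.smul_comp]
      have hns : ‖(μ t / μ s) ^ (γ₂ - γ) • (shiftEvo μ γ₂ Φ t s ∘L (1 - P s))‖
          = (μ t / μ s) ^ (γ₂ - γ) * ‖shiftEvo μ γ₂ Φ t s ∘L (1 - P s)‖ := by
        have h := norm_smul ((μ t / μ s) ^ (γ₂ - γ)) (shiftEvo μ γ₂ Φ t s ∘L (1 - P s))
        rwa [Real.norm_eq_abs, abs_of_pos (Real.rpow_pos_of_pos (hrdiv t s) _)] at h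
      calc ‖(μ t / μ s) ^ (γ₂ - γ) • (shiftEvo μ γ₂ Φ t s ∘L (1 - P s))‖
          = (μ t / μ s) ^ (γ₂ - γ) * ‖shiftEvo μ γ₂ Φ t s ∘L (1 - P s)‖ := hns
        _ ≤ 1 * (K₂ * (μ t / μ s) ^ β₂ * μ s ^ (Real.sign s * ν₂)) := by
            apply mul_le_mul
            · exact Real.rpow_le_one (hrdiv t s).le hr1 (by linarith)
            · exact hU2 t s hts
            · exact norm_nonneg _
            · exact zero_le_one
        _ = K₂ * (μ t / μ s) ^ β₂ * μ s ^ (Real.sign s * ν₂) := one_mul _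
        _ ≤ max K₁ K₂ * (μ t / μ s) ^ β₂ * μ s ^ (Real.sign s * ν₂) := by
            refine mul_le_mul_of_nonneg_right (mul_le_mul_of_nonneg_right
              (le_max_right _ _) ?_) ?_
            · exact (Real.rpow_pos_of_pos (hrdiv t s) _).le
            · exact (Real.rpow_pos_of_pos (hμpos s) _).le
  exact ⟨main, fun γ hγ => ⟨P, max K₁ K₂, α₁, β₂, θ₁, ν₂, main γ hγ⟩⟩
end
end

section
/- The nonuniform μ-dichotomy spectrum Σ^{ND}_μ(A) of x' = A(t)x, A(t) ∈ Mₙ(ℝ), is the union of at most n disjoint closed intervals of ℝ: there is m ∈ {0,…,n} with Σ^{ND}_μ(A) = ∅ if m = 0; Σ^{ND}_μ(A) equal to ℝ, (−∞,b₁], [a₁,b₁], or [a₁,∞) if m = 1; and Σ^{ND}_μ(A) = I₁ ∪ [a₂,b₂] ∪ … ∪ [a_{m−1},b_{m−1}] ∪ I_m with I₁ = [a₁,b₁] or (−∞,b₁], I_m = [a_m,b_m] or [a_m,∞), and aᵢ ≤ bᵢ < a_{i+1}, if 1 < m ≤ n. -/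
open Filter Topology

noncomputable section

namespace Stmt11Aux

variable {n : ℕ} {μ : ℝ → ℝ} {Φ : ℝ → ℝ → Op n}

lemma gr_pos (hgr : GrowthRate μ) (t : ℝ) : 0 < μ t := hgr.2.1 t

lemma gr_zero (hgr : GrowthRate μ) : μ 0 = 1 := hgr.2.2.1

lemma gr_div_pos (hgr : GrowthRate μ) (t s : ℝ) : 0 < μ t / μ s :=
  div_pos (gr_pos hgr t) (gr_pos hgr s)

lemma shiftEvo_shift (hgr : GrowthRate μ) (γ γ' t s : ℝ) :
    shiftEvo μ γ' Φ t s = (μ t / μ s) ^ (γ - γ') • shiftEvo μ γ Φ t s := by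
  have h := gr_div_pos hgr t s
  simp only [shiftEvo, smul_smul, ← Real.rpow_add h]
  congr 2
  ring

lemma shiftEvo_self (hgr : GrowthRate μ) (hid : ∀ s, Φ s s = 1) (γ s : ℝ) :
    shiftEvo μ γ Φ s s = 1 := by
  simp [shiftEvo, div_self (ne_of_gt (gr_pos hgr s)), Real.one_rpow, hid s]

lemma shiftEvo_comp (hgr : GrowthRate μ) (hcoc : ∀ t τ s, Φ t τ ∘L Φ τ s = Φ t s)
    (γ t τ s : ℝ) :
    shiftEvo μ γ Φ t τ ∘L shiftEvo μ γ Φ τ s = shiftEvo μ γ Φ t s := by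
  have h1 : μ τ / μ s * (μ t / μ τ) = μ t / μ s := by
    rw [div_mul_div_comm, mul_comm (μ s) (μ τ), mul_div_mul_left _ _ (ne_of_gt (gr_pos hgr τ))]
  simp only [shiftEvo, ContinuousLinearMap.smul_comp, ContinuousLinearMap.comp_smul, smul_smul,
    ← Real.mul_rpow (le_of_lt (gr_div_pos hgr τ s)) (le_of_lt (gr_div_pos hgr t τ)), h1, hcoc]

lemma shiftEvo_inv (hgr : GrowthRate μ) (hid : ∀ s, Φ s s = 1)
    (hcoc : ∀ t τ s, Φ t τ ∘L Φ τ s = Φ t s) (γ t s : ℝ) :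
    shiftEvo μ γ Φ t s ∘L shiftEvo μ γ Φ s t = 1 := by
  rw [shiftEvo_comp hgr hcoc, shiftEvo_self hgr hid]

lemma inv_phi (hgr : GrowthRate μ) {γ : ℝ} {P : ℝ → Op n} {K α β θ ν : ℝ}
    (h : NuDWith μ (shiftEvo μ γ Φ) P K α β θ ν) (t s : ℝ) :
    P t ∘L Φ t s = Φ t s ∘L P s := by
  have h2 := h.2.1 t s
  have hc : ((μ t / μ s) ^ (-γ)) ≠ 0 :=
    ne_of_gt (Real.rpow_pos_of_pos (gr_div_pos hgr t s) _)
  simp only [shiftEvo, ContinuousLinearMap.comp_smul, ContinuousLinearMap.smul_comp] at h2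
  exact smul_right_injective (Op n) hc h2

lemma conj_P (hgr : GrowthRate μ) (hid : ∀ s, Φ s s = 1)
    (hcoc : ∀ t τ s, Φ t τ ∘L Φ τ s = Φ t s)
    {γ : ℝ} {P : ℝ → Op n} {K α β θ ν : ℝ}
    (h : NuDWith μ (shiftEvo μ γ Φ) P K α β θ ν) (t : ℝ) :
    P t = Φ t 0 ∘L (P 0 ∘L Φ 0 t) := by
  have h1 := inv_phi hgr h t 0
  have h4 : Φ t 0 ∘L Φ 0 t = 1 := by rw [hcoc t 0 t, hid t]
  calc P t = P t ∘L (Φ t 0 ∘L Φ 0 t) := by rw [h4]; ext x; simp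
    _ = (P t ∘L Φ t 0) ∘L Φ 0 t := by rw [ContinuousLinearMap.comp_assoc]
    _ = (Φ t 0 ∘L P 0) ∘L Φ 0 t := by rw [h1]
    _ = Φ t 0 ∘L (P 0 ∘L Φ 0 t) := by rw [ContinuousLinearMap.comp_assoc]

/-- The stable subspace at time 0 for exponent γ. -/
def Uc (μ : ℝ → ℝ) (hgr : GrowthRate μ) (Φ : ℝ → ℝ → Op n) (γ : ℝ) :
    Submodule ℝ (EuclideanSpace ℝ (Fin n)) where
  carrier := {ξ | ∃ C, ∀ t, 0 ≤ t → ‖Φ t 0 ξ‖ * μ t ^ (-γ) ≤ C}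
  add_mem' := by
    rintro a b ⟨C, hC⟩ ⟨D, hD⟩
    refine ⟨C + D, fun t ht => ?_⟩
    have hw : (0:ℝ) ≤ μ t ^ (-γ) := Real.rpow_nonneg (le_of_lt (gr_pos hgr t)) _
    have h1 : ‖Φ t 0 (a + b)‖ ≤ ‖Φ t 0 a‖ + ‖Φ t 0 b‖ := by
      rw [map_add]; exact norm_add_le _ _
    calc ‖Φ t 0 (a + b)‖ * μ t ^ (-γ) ≤ (‖Φ t 0 a‖ + ‖Φ t 0 b‖) * μ t ^ (-γ) :=
          mul_le_mul_of_nonneg_right h1 hw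
      _ = ‖Φ t 0 a‖ * μ t ^ (-γ) + ‖Φ t 0 b‖ * μ t ^ (-γ) := add_mul _ _ _
      _ ≤ C + D := add_le_add (hC t ht) (hD t ht)
  zero_mem' := ⟨0, fun t _ => by simp⟩
  smul_mem' := by
    rintro c a ⟨C, hC⟩
    refine ⟨|c| * C, fun t ht => ?_⟩
    rw [map_smul, norm_smul, Real.norm_eq_abs, mul_assoc]
    exact mul_le_mul_of_nonneg_left (hC t ht) (abs_nonneg c)

/-- The unstable subspace at time 0 for exponent γ. -/
def Vc (μ : ℝ → ℝ) (hgr : GrowthRate μ) (Φ : ℝ → ℝ → Op n) (γ : ℝ) :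
    Submodule ℝ (EuclideanSpace ℝ (Fin n)) where
  carrier := {ξ | ∃ C, ∀ t, t ≤ 0 → ‖Φ t 0 ξ‖ * μ t ^ (-γ) ≤ C}
  add_mem' := by
    rintro a b ⟨C, hC⟩ ⟨D, hD⟩
    refine ⟨C + D, fun t ht => ?_⟩
    have hw : (0:ℝ) ≤ μ t ^ (-γ) := Real.rpow_nonneg (le_of_lt (gr_pos hgr t)) _
    have h1 : ‖Φ t 0 (a + b)‖ ≤ ‖Φ t 0 a‖ + ‖Φ t 0 b‖ := by
      rw [map_add]; exact norm_add_le _ _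
    calc ‖Φ t 0 (a + b)‖ * μ t ^ (-γ) ≤ (‖Φ t 0 a‖ + ‖Φ t 0 b‖) * μ t ^ (-γ) :=
          mul_le_mul_of_nonneg_right h1 hw
      _ = ‖Φ t 0 a‖ * μ t ^ (-γ) + ‖Φ t 0 b‖ * μ t ^ (-γ) := add_mul _ _ _
      _ ≤ C + D := add_le_add (hC t ht) (hD t ht)
  zero_mem' := ⟨0, fun t _ => by simp⟩
  smul_mem' := by
    rintro c a ⟨C, hC⟩
    refine ⟨|c| * C, fun t ht => ?_⟩
    rw [map_smul, norm_smul, Real.norm_eq_abs, mul_assoc]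
    exact mul_le_mul_of_nonneg_left (hC t ht) (abs_nonneg c)

lemma Uc_mono (hgr : GrowthRate μ) {γ₁ γ₂ : ℝ} (h : γ₁ ≤ γ₂) :
    Uc μ hgr Φ γ₁ ≤ Uc μ hgr Φ γ₂ := by
  rintro ξ ⟨C, hC⟩
  have hC0 : (0:ℝ) ≤ C := le_trans (mul_nonneg (norm_nonneg _) (Real.rpow_nonneg (le_of_lt (gr_pos hgr 0)) _)) (hC 0 le_rfl)
  refine ⟨C, fun t ht => ?_⟩
  have hμt := gr_pos hgr t
  have h1 : (1:ℝ) ≤ μ t := by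
    rw [← gr_zero hgr]; exact hgr.1.monotone ht
  have e : ‖Φ t 0 ξ‖ * μ t ^ (-γ₂) = ‖Φ t 0 ξ‖ * μ t ^ (-γ₁) * μ t ^ (γ₁ - γ₂) := by
    rw [mul_assoc, ← Real.rpow_add hμt]
    congr 2
    ring
  rw [e]
  calc ‖Φ t 0 ξ‖ * μ t ^ (-γ₁) * μ t ^ (γ₁ - γ₂) ≤ C * 1 := by
        apply mul_le_mul (hC t ht)
          (Real.rpow_le_one_of_one_le_of_nonpos h1 (by linarith))
          (Real.rpow_nonneg (le_of_lt hμt) _) hC0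
    _ = C := mul_one C

lemma Vc_anti (hgr : GrowthRate μ) {γ₁ γ₂ : ℝ} (h : γ₁ ≤ γ₂) :
    Vc μ hgr Φ γ₂ ≤ Vc μ hgr Φ γ₁ := by
  rintro ξ ⟨C, hC⟩
  have hC0 : (0:ℝ) ≤ C := le_trans (mul_nonneg (norm_nonneg _) (Real.rpow_nonneg (le_of_lt (gr_pos hgr 0)) _)) (hC 0 le_rfl)
  refine ⟨C, fun t ht => ?_⟩
  have hμt := gr_pos hgr t
  have h1 : μ t ≤ 1 := by
    rw [← gr_zero hgr]; exact hgr.1.monotone ht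
  have e : ‖Φ t 0 ξ‖ * μ t ^ (-γ₁) = ‖Φ t 0 ξ‖ * μ t ^ (-γ₂) * μ t ^ (γ₂ - γ₁) := by
    rw [mul_assoc, ← Real.rpow_add hμt]
    congr 2
    ring
  rw [e]
  calc ‖Φ t 0 ξ‖ * μ t ^ (-γ₂) * μ t ^ (γ₂ - γ₁) ≤ C * 1 := by
        apply mul_le_mul (hC t ht)
          (Real.rpow_le_one (le_of_lt hμt) h1 (by linarith))
          (Real.rpow_nonneg (le_of_lt hμt) _) hC0
    _ = C := mul_one C

lemma norm_shift_apply (hgr : GrowthRate μ) (γ t : ℝ) (ξ : EuclideanSpace ℝ (Fin n)) :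
    ‖shiftEvo μ γ Φ t 0 ξ‖ = ‖Φ t 0 ξ‖ * μ t ^ (-γ) := by
  have hμt := gr_pos hgr t
  simp only [shiftEvo, gr_zero hgr, div_one, ContinuousLinearMap.smul_apply, norm_smul,
    Real.norm_eq_abs, abs_of_pos (Real.rpow_pos_of_pos hμt (-γ))]
  ring

lemma range_eq (hgr : GrowthRate μ) (hid : ∀ s, Φ s s = 1)
    (hcoc : ∀ t τ s, Φ t τ ∘L Φ τ s = Φ t s)
    {γ : ℝ} {P : ℝ → Op n} {K α β θ ν : ℝ}
    (h : NuDWith μ (shiftEvo μ γ Φ) P K α β θ ν) :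
    LinearMap.range ((P 0) : EuclideanSpace ℝ (Fin n) →ₗ[ℝ] EuclideanSpace ℝ (Fin n)) = Uc μ hgr Φ γ := by
  obtain ⟨hproj, hinv, hK, hα, hβ, hθ, hν, hαθ, hβν, hst, hun⟩ := h
  apply le_antisymm
  · rintro ξ ⟨x, rfl⟩
    refine ⟨K * ‖x‖, fun t ht => ?_⟩
    have hμt := gr_pos hgr t
    have h1 : (1:ℝ) ≤ μ t := by rw [← gr_zero hgr]; exact hgr.1.monotone ht
    have key : ‖Φ t 0 (P 0 x)‖ * μ t ^ (-γ) = ‖(shiftEvo μ γ Φ t 0 ∘L P 0) x‖ := by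
      rw [ContinuousLinearMap.comp_apply, norm_shift_apply hgr]
    change ‖Φ t 0 (P 0 x)‖ * μ t ^ (-γ) ≤ K * ‖x‖
    rw [key]
    have hb := hst t 0 ht
    simp only [gr_zero hgr, div_one, Real.sign_zero, zero_mul, Real.rpow_zero, mul_one] at hb
    calc ‖(shiftEvo μ γ Φ t 0 ∘L P 0) x‖ ≤ ‖shiftEvo μ γ Φ t 0 ∘L P 0‖ * ‖x‖ :=
          ContinuousLinearMap.le_opNorm _ _
      _ ≤ K * μ t ^ α * ‖x‖ := mul_le_mul_of_nonneg_right hb (norm_nonneg x)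
      _ ≤ K * 1 * ‖x‖ := by
          apply mul_le_mul_of_nonneg_right _ (norm_nonneg x)
          exact mul_le_mul_of_nonneg_left
            (Real.rpow_le_one_of_one_le_of_nonpos h1 (le_of_lt hα)) (by linarith)
      _ = K * ‖x‖ := by ring
  · rintro ξ ⟨C, hC⟩
    have hC0 : (0:ℝ) ≤ C := le_trans
      (mul_nonneg (norm_nonneg _) (Real.rpow_nonneg (le_of_lt (gr_pos hgr 0)) _)) (hC 0 le_rfl)
    have hQinv : ∀ t s, (1 - P t) ∘L shiftEvo μ γ Φ t s = shiftEvo μ γ Φ t s ∘L (1 - P s) := by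
      intro t s
      rw [ContinuousLinearMap.sub_comp, ContinuousLinearMap.comp_sub, hinv t s]
      congr 1
    have main : ∀ t : ℝ, 0 < t → ‖(1 - P 0) ξ‖ ≤ K * C * μ t ^ (ν - β) := by
      intro t ht
      have hμt := gr_pos hgr t
      have hone : shiftEvo μ γ Φ 0 t ∘L shiftEvo μ γ Φ t 0 = 1 := shiftEvo_inv hgr hid hcoc γ 0 t
      have e1 : (1 - P 0) ξ = (shiftEvo μ γ Φ 0 t ∘L (1 - P t)) (shiftEvo μ γ Φ t 0 ξ) := by
        have e2 : (1 - P 0) ξ = ((1 - P 0) ∘L (shiftEvo μ γ Φ 0 t ∘L shiftEvo μ γ Φ t 0)) ξ := by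
          rw [hone]; simp
        rw [e2, ← ContinuousLinearMap.comp_assoc, hQinv 0 t]
        simp [ContinuousLinearMap.comp_apply]
      have hb := hun 0 t (le_of_lt ht)
      rw [Real.sign_of_pos ht, one_mul, gr_zero hgr] at hb
      have hb2 : K * (1 / μ t) ^ β * μ t ^ ν = K * μ t ^ (ν - β) := by
        rw [one_div, Real.inv_rpow (le_of_lt hμt), ← Real.rpow_neg (le_of_lt hμt), mul_assoc,
          ← Real.rpow_add hμt]
        congr 2
        ring
      rw [hb2] at hb
      have hΨξ : ‖shiftEvo μ γ Φ t 0 ξ‖ ≤ C := by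
        rw [norm_shift_apply hgr]; exact hC t (le_of_lt ht)
      calc ‖(1 - P 0) ξ‖ = ‖(shiftEvo μ γ Φ 0 t ∘L (1 - P t)) (shiftEvo μ γ Φ t 0 ξ)‖ := by
            rw [← e1]
        _ ≤ ‖shiftEvo μ γ Φ 0 t ∘L (1 - P t)‖ * ‖shiftEvo μ γ Φ t 0 ξ‖ :=
            ContinuousLinearMap.le_opNorm _ _
        _ ≤ K * μ t ^ (ν - β) * C := by
            apply mul_le_mul hb hΨξ (norm_nonneg _)
            exact mul_nonneg (by linarith) (Real.rpow_nonneg (le_of_lt hμt) _)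
        _ = K * C * μ t ^ (ν - β) := by ring
    have hlim : Tendsto (fun t => K * C * μ t ^ (ν - β)) atTop (𝓝 (K * C * 0)) := by
      apply Tendsto.const_mul
      have : (fun t => μ t ^ (ν - β)) = (fun x : ℝ => x ^ (-(β - ν))) ∘ μ := by
        funext x; simp only [Function.comp_apply]; congr 1; ring
      rw [this]
      exact (tendsto_rpow_neg_atTop hβν).comp hgr.2.2.2.1
    rw [mul_zero] at hlim
    have hle : ‖(1 - P 0) ξ‖ ≤ 0 := by
      apply ge_of_tendsto hlim
      filter_upwards [eventually_ge_atTop 1] with t ht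
      exact main t (by linarith)
    have hQ0 : (1 - P 0) ξ = 0 := norm_le_zero_iff.mp hle
    refine ⟨ξ, ?_⟩
    have : ξ - P 0 ξ = 0 := by simpa using hQ0
    have := sub_eq_zero.mp this
    exact this.symm

lemma ker_eq (hgr : GrowthRate μ) (hid : ∀ s, Φ s s = 1)
    (hcoc : ∀ t τ s, Φ t τ ∘L Φ τ s = Φ t s)
    {γ : ℝ} {P : ℝ → Op n} {K α β θ ν : ℝ}
    (h : NuDWith μ (shiftEvo μ γ Φ) P K α β θ ν) :
    LinearMap.ker ((P 0) : EuclideanSpace ℝ (Fin n) →ₗ[ℝ] EuclideanSpace ℝ (Fin n)) = Vc μ hgr Φ γ := by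
  obtain ⟨hproj, hinv, hK, hα, hβ, hθ, hν, hαθ, hβν, hst, hun⟩ := h
  apply le_antisymm
  · intro ξ hξ
    have hξ0 : P 0 ξ = 0 := hξ
    refine ⟨K * ‖ξ‖, fun t ht => ?_⟩
    have hμt := gr_pos hgr t
    have h1 : μ t ≤ 1 := by rw [← gr_zero hgr]; exact hgr.1.monotone ht
    have key : ‖Φ t 0 ξ‖ * μ t ^ (-γ) = ‖(shiftEvo μ γ Φ t 0 ∘L (1 - P 0)) ξ‖ := by
      rw [ContinuousLinearMap.comp_apply]
      have : (1 - P 0) ξ = ξ := by simp [hξ0]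
      rw [this, norm_shift_apply hgr]
    rw [key]
    have hb := hun t 0 ht
    simp only [gr_zero hgr, div_one, Real.sign_zero, zero_mul, Real.rpow_zero, mul_one] at hb
    calc ‖(shiftEvo μ γ Φ t 0 ∘L (1 - P 0)) ξ‖ ≤ ‖shiftEvo μ γ Φ t 0 ∘L (1 - P 0)‖ * ‖ξ‖ :=
          ContinuousLinearMap.le_opNorm _ _
      _ ≤ K * μ t ^ β * ‖ξ‖ := mul_le_mul_of_nonneg_right hb (norm_nonneg ξ)
      _ ≤ K * 1 * ‖ξ‖ := by
          apply mul_le_mul_of_nonneg_right _ (norm_nonneg ξ)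
          exact mul_le_mul_of_nonneg_left
            (Real.rpow_le_one (le_of_lt hμt) h1 (le_of_lt hβ)) (by linarith)
      _ = K * ‖ξ‖ := by ring
  · rintro ξ ⟨C, hC⟩
    have hC0 : (0:ℝ) ≤ C := le_trans
      (mul_nonneg (norm_nonneg _) (Real.rpow_nonneg (le_of_lt (gr_pos hgr 0)) _)) (hC 0 le_rfl)
    have main : ∀ t : ℝ, t < 0 → ‖P 0 ξ‖ ≤ K * C * μ t ^ (-(α + θ)) := by
      intro t ht
      have hμt := gr_pos hgr t
      have hone : shiftEvo μ γ Φ 0 t ∘L shiftEvo μ γ Φ t 0 = 1 := shiftEvo_inv hgr hid hcoc γ 0 t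
      have e1 : P 0 ξ = (shiftEvo μ γ Φ 0 t ∘L P t) (shiftEvo μ γ Φ t 0 ξ) := by
        have e2 : P 0 ξ = (P 0 ∘L (shiftEvo μ γ Φ 0 t ∘L shiftEvo μ γ Φ t 0)) ξ := by
          rw [hone]; simp
        rw [e2, ← ContinuousLinearMap.comp_assoc, hinv 0 t]
        simp [ContinuousLinearMap.comp_apply]
      have hb := hst 0 t ht.le
      rw [Real.sign_of_neg ht, gr_zero hgr] at hb
      have hb2 : K * (1 / μ t) ^ α * μ t ^ (-1 * θ) = K * μ t ^ (-(α + θ)) := by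
        rw [one_div, Real.inv_rpow (le_of_lt hμt), ← Real.rpow_neg (le_of_lt hμt), mul_assoc,
          ← Real.rpow_add hμt]
        congr 2
        ring
      rw [hb2] at hb
      have hΨξ : ‖shiftEvo μ γ Φ t 0 ξ‖ ≤ C := by
        rw [norm_shift_apply hgr]; exact hC t ht.le
      calc ‖P 0 ξ‖ = ‖(shiftEvo μ γ Φ 0 t ∘L P t) (shiftEvo μ γ Φ t 0 ξ)‖ := by rw [← e1]
        _ ≤ ‖shiftEvo μ γ Φ 0 t ∘L P t‖ * ‖shiftEvo μ γ Φ t 0 ξ‖ :=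
            ContinuousLinearMap.le_opNorm _ _
        _ ≤ K * μ t ^ (-(α + θ)) * C := by
            apply mul_le_mul hb hΨξ (norm_nonneg _)
            exact mul_nonneg (by linarith) (Real.rpow_nonneg (le_of_lt hμt) _)
        _ = K * C * μ t ^ (-(α + θ)) := by ring
    have hc : (0:ℝ) < -(α + θ) := by linarith
    have hlim : Tendsto (fun t => K * C * μ t ^ (-(α + θ))) atBot (𝓝 (K * C * 0)) := by
      apply Tendsto.const_mul
      have hcont : ContinuousAt (fun x : ℝ => x ^ (-(α + θ))) 0 :=
        Real.continuousAt_rpow_const 0 _ (Or.inr (le_of_lt hc))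
      have := hcont.tendsto.comp hgr.2.2.2.2
      rw [Real.zero_rpow (ne_of_gt hc)] at this
      exact this
    rw [mul_zero] at hlim
    have hle : ‖P 0 ξ‖ ≤ 0 := by
      apply ge_of_tendsto hlim
      filter_upwards [eventually_le_atBot (-1 : ℝ)] with t ht
      exact main t (by linarith)
    exact norm_le_zero_iff.mp hle

lemma op_norm_smul {c : ℝ} (F : Op n) (hc : 0 < c) : ‖c • F‖ = c * ‖F‖ := by
  rw [norm_smul c F, Real.norm_eq_abs, abs_of_pos hc]

lemma proj_eq {f g : Op n} (hf : f ∘L f = f) (hg : g ∘L g = g)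
    (hr : LinearMap.range (f : EuclideanSpace ℝ (Fin n) →ₗ[ℝ] EuclideanSpace ℝ (Fin n)) = LinearMap.range (g : EuclideanSpace ℝ (Fin n) →ₗ[ℝ] EuclideanSpace ℝ (Fin n)))
    (hk : LinearMap.ker (f : EuclideanSpace ℝ (Fin n) →ₗ[ℝ] EuclideanSpace ℝ (Fin n)) = LinearMap.ker (g : EuclideanSpace ℝ (Fin n) →ₗ[ℝ] EuclideanSpace ℝ (Fin n))) : f = g := by
  apply ContinuousLinearMap.ext
  intro x
  have h1 : g (f x) = f x := by
    have hmem : f x ∈ LinearMap.range (g : EuclideanSpace ℝ (Fin n) →ₗ[ℝ] EuclideanSpace ℝ (Fin n)) := hr ▸ LinearMap.mem_range_self (f : EuclideanSpace ℝ (Fin n) →ₗ[ℝ] EuclideanSpace ℝ (Fin n)) x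
    obtain ⟨y, hy⟩ := hmem
    have : g (g y) = g y := by
      have := congrArg (fun F : Op n => F y) hg
      simpa using this
    rw [← hy]
    exact this
  have h2 : g (x - f x) = 0 := by
    have hxf : x - f x ∈ LinearMap.ker (f : EuclideanSpace ℝ (Fin n) →ₗ[ℝ] EuclideanSpace ℝ (Fin n)) := by
      have hffx : f (f x) = f x := by
        have := congrArg (fun F : Op n => F x) hf
        simpa using this
      simp [LinearMap.mem_ker, map_sub, hffx]
    rw [hk] at hxf
    exact hxf
  have h3 : g x - g (f x) = 0 := by rw [← map_sub]; exact h2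
  have : g x = f x := (sub_eq_zero.mp h3).trans h1
  exact this.symm

lemma prod_factor_le {K₁ K₂ A B : ℝ} (hA : 0 ≤ A) (hB : 0 ≤ B) (h : K₁ ≤ K₂) :
    K₁ * A * B ≤ K₂ * A * B := by
  apply mul_le_mul_of_nonneg_right _ hB
  exact mul_le_mul_of_nonneg_right h hA

lemma witness_mix (hgr : GrowthRate μ)
    {γ₁ γ₂ γ : ℝ} {P : ℝ → Op n} {K₁ α₁ β₁ θ₁ ν₁ K₂ α₂ β₂ θ₂ ν₂ : ℝ}
    (h₁ : NuDWith μ (shiftEvo μ γ₁ Φ) P K₁ α₁ β₁ θ₁ ν₁)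
    (h₂ : NuDWith μ (shiftEvo μ γ₂ Φ) P K₂ α₂ β₂ θ₂ ν₂)
    (hs : α₁ + θ₁ + (γ₁ - γ) < 0) (hu : 0 < β₂ - ν₂ + (γ₂ - γ)) :
    NuD μ (shiftEvo μ γ Φ) := by
  obtain ⟨hproj₁, hinv₁, hK₁, hα₁, hβ₁, hθ₁, hν₁, hαθ₁, hβν₁, hst₁, hun₁⟩ := h₁
  obtain ⟨hproj₂, hinv₂, hK₂, hα₂, hβ₂, hθ₂, hν₂, hαθ₂, hβν₂, hst₂, hun₂⟩ := h₂
  refine ⟨P, max K₁ K₂, α₁ + (γ₁ - γ), β₂ + (γ₂ - γ), θ₁, ν₂,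
    hproj₁, ?_, le_trans hK₁ (le_max_left _ _), by linarith, by linarith, hθ₁, hν₂,
    by linarith, by linarith, ?_, ?_⟩
  · intro t s
    have e := shiftEvo_shift (Φ := Φ) hgr γ₁ γ t s
    rw [e, ContinuousLinearMap.comp_smul, ContinuousLinearMap.smul_comp, hinv₁ t s]
  · intro t s hts
    have hx := gr_div_pos hgr t s
    have hμs := gr_pos hgr s
    have e : shiftEvo μ γ Φ t s ∘L P s
        = (μ t / μ s) ^ (γ₁ - γ) • (shiftEvo μ γ₁ Φ t s ∘L P s) := by
      rw [shiftEvo_shift (Φ := Φ) hgr γ₁ γ t s, ContinuousLinearMap.smul_comp]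
    rw [e, op_norm_smul _ (Real.rpow_pos_of_pos hx _)]
    calc (μ t / μ s) ^ (γ₁ - γ) * ‖shiftEvo μ γ₁ Φ t s ∘L P s‖
        ≤ (μ t / μ s) ^ (γ₁ - γ) * (K₁ * (μ t / μ s) ^ α₁ * μ s ^ (Real.sign s * θ₁)) :=
          mul_le_mul_of_nonneg_left (hst₁ t s hts) (Real.rpow_nonneg (le_of_lt hx) _)
      _ = K₁ * (μ t / μ s) ^ (α₁ + (γ₁ - γ)) * μ s ^ (Real.sign s * θ₁) := by
          rw [Real.rpow_add hx]; ring
      _ ≤ max K₁ K₂ * (μ t / μ s) ^ (α₁ + (γ₁ - γ)) * μ s ^ (Real.sign s * θ₁) :=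
          prod_factor_le (Real.rpow_nonneg (le_of_lt hx) _)
            (Real.rpow_nonneg (le_of_lt hμs) _) (le_max_left _ _)
  · intro t s hts
    have hx := gr_div_pos hgr t s
    have hμs := gr_pos hgr s
    have e : shiftEvo μ γ Φ t s ∘L (1 - P s)
        = (μ t / μ s) ^ (γ₂ - γ) • (shiftEvo μ γ₂ Φ t s ∘L (1 - P s)) := by
      rw [shiftEvo_shift (Φ := Φ) hgr γ₂ γ t s, ContinuousLinearMap.smul_comp]
    rw [e, op_norm_smul _ (Real.rpow_pos_of_pos hx _)]
    calc (μ t / μ s) ^ (γ₂ - γ) * ‖shiftEvo μ γ₂ Φ t s ∘L (1 - P s)‖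
        ≤ (μ t / μ s) ^ (γ₂ - γ) * (K₂ * (μ t / μ s) ^ β₂ * μ s ^ (Real.sign s * ν₂)) :=
          mul_le_mul_of_nonneg_left (hun₂ t s hts) (Real.rpow_nonneg (le_of_lt hx) _)
      _ = K₂ * (μ t / μ s) ^ (β₂ + (γ₂ - γ)) * μ s ^ (Real.sign s * ν₂) := by
          rw [Real.rpow_add hx]; ring
      _ ≤ max K₁ K₂ * (μ t / μ s) ^ (β₂ + (γ₂ - γ)) * μ s ^ (Real.sign s * ν₂) :=
          prod_factor_le (Real.rpow_nonneg (le_of_lt hx) _)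
            (Real.rpow_nonneg (le_of_lt hμs) _) (le_max_right _ _)

lemma res_open (hgr : GrowthRate μ) : IsOpen (resolventND μ Φ) := by
  rw [isOpen_iff_mem_nhds]
  rintro γ ⟨P, K, α, β, θ, ν, h⟩
  have hαθ := h.2.2.2.2.2.2.2.1
  have hβν := h.2.2.2.2.2.2.2.2.1
  have hsub : Set.Ioo (γ + (α + θ)) (γ + (β - ν)) ⊆ resolventND μ Φ := by
    rintro γ' ⟨hl, hr⟩
    exact witness_mix hgr h h (by linarith) (by linarith)
  exact mem_nhds_iff.mpr ⟨_, hsub, isOpen_Ioo, by constructor <;> [linarith; linarith]⟩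

lemma res_left (hgr : GrowthRate μ)
    {γ γ' : ℝ} (hle : γ' ≤ γ) {P : ℝ → Op n} {K α β θ ν : ℝ}
    (h : NuDWith μ (shiftEvo μ γ Φ) P K α β θ ν) (hP : ∀ t, P t = 0) :
    NuD μ (shiftEvo μ γ' Φ) := by
  obtain ⟨hproj, hinv, hK, hα, hβ, hθ, hν, hαθ, hβν, hst, hun⟩ := h
  refine ⟨fun _ => 0, K, α, β + (γ - γ'), θ, ν,
    fun t => by simp, fun t s => by simp, hK, hα, by linarith, hθ, hν, by linarith,
    by linarith, ?_, ?_⟩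
  · intro t s hts
    have hx := gr_div_pos hgr t s
    have hμs := gr_pos hgr s
    rw [ContinuousLinearMap.comp_zero, norm_zero]
    apply mul_nonneg (mul_nonneg (by linarith) (Real.rpow_nonneg (le_of_lt hx) _))
      (Real.rpow_nonneg (le_of_lt hμs) _)
  · intro t s hts
    have hx := gr_div_pos hgr t s
    have hμs := gr_pos hgr s
    have e0 : (1 : Op n) - 0 = 1 := by simp
    rw [e0]
    have e1 : shiftEvo μ γ' Φ t s ∘L (1 : Op n) = shiftEvo μ γ' Φ t s := by ext x; simp
    have e2 : shiftEvo μ γ Φ t s ∘L (1 - P s) = shiftEvo μ γ Φ t s := by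
      rw [hP s]; ext x; simp
    have hb := hun t s hts
    rw [e2] at hb
    rw [e1, shiftEvo_shift (Φ := Φ) hgr γ γ' t s,
      op_norm_smul _ (Real.rpow_pos_of_pos hx _)]
    calc (μ t / μ s) ^ (γ - γ') * ‖shiftEvo μ γ Φ t s‖
        ≤ (μ t / μ s) ^ (γ - γ') * (K * (μ t / μ s) ^ β * μ s ^ (Real.sign s * ν)) :=
          mul_le_mul_of_nonneg_left hb (Real.rpow_nonneg (le_of_lt hx) _)
      _ = K * (μ t / μ s) ^ (β + (γ - γ')) * μ s ^ (Real.sign s * ν) := by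
          rw [Real.rpow_add hx]; ring

lemma res_right (hgr : GrowthRate μ)
    {γ γ' : ℝ} (hle : γ ≤ γ') {P : ℝ → Op n} {K α β θ ν : ℝ}
    (h : NuDWith μ (shiftEvo μ γ Φ) P K α β θ ν) (hP : ∀ t, P t = 1) :
    NuD μ (shiftEvo μ γ' Φ) := by
  obtain ⟨hproj, hinv, hK, hα, hβ, hθ, hν, hαθ, hβν, hst, hun⟩ := h
  refine ⟨fun _ => 1, K, α + (γ - γ'), β, θ, ν,
    fun t => by ext x; simp, fun t s => by ext x; simp, hK, by linarith, hβ, hθ, hν,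
    by linarith, by linarith, ?_, ?_⟩
  · intro t s hts
    have hx := gr_div_pos hgr t s
    have hμs := gr_pos hgr s
    have e1 : shiftEvo μ γ' Φ t s ∘L (1 : Op n) = shiftEvo μ γ' Φ t s := by ext x; simp
    have e2 : shiftEvo μ γ Φ t s ∘L P s = shiftEvo μ γ Φ t s := by
      rw [hP s]; ext x; simp
    have hb := hst t s hts
    rw [e2] at hb
    rw [e1, shiftEvo_shift (Φ := Φ) hgr γ γ' t s,
      op_norm_smul _ (Real.rpow_pos_of_pos hx _)]
    calc (μ t / μ s) ^ (γ - γ') * ‖shiftEvo μ γ Φ t s‖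
        ≤ (μ t / μ s) ^ (γ - γ') * (K * (μ t / μ s) ^ α * μ s ^ (Real.sign s * θ)) :=
          mul_le_mul_of_nonneg_left hb (Real.rpow_nonneg (le_of_lt hx) _)
      _ = K * (μ t / μ s) ^ (α + (γ - γ')) * μ s ^ (Real.sign s * θ) := by
          rw [Real.rpow_add hx]; ring
  · intro t s hts
    have hx := gr_div_pos hgr t s
    have hμs := gr_pos hgr s
    have e0 : (1 : Op n) - 1 = 0 := by simp
    rw [e0, ContinuousLinearMap.comp_zero, norm_zero]
    apply mul_nonneg (mul_nonneg (by linarith) (Real.rpow_nonneg (le_of_lt hx) _))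
      (Real.rpow_nonneg (le_of_lt hμs) _)

/-- The dimension function. -/
def dfun (μ : ℝ → ℝ) (hgr : GrowthRate μ) (Φ : ℝ → ℝ → Op n) (γ : ℝ) : ℕ :=
  Module.finrank ℝ (Uc μ hgr Φ γ)

lemma dfun_mono (hgr : GrowthRate μ) : Monotone (dfun μ hgr Φ) :=
  fun _ _ h => Submodule.finrank_mono (Uc_mono hgr h)

lemma dfun_le (hgr : GrowthRate μ) (γ : ℝ) : dfun μ hgr Φ γ ≤ n := by
  have := Submodule.finrank_le (Uc μ hgr Φ γ)
  rwa [finrank_euclideanSpace_fin] at this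

lemma F4c (hgr : GrowthRate μ) (hid : ∀ s, Φ s s = 1)
    (hcoc : ∀ t τ s, Φ t τ ∘L Φ τ s = Φ t s)
    {γ₁ γ₂ : ℝ} (h₁ : γ₁ ∈ resolventND μ Φ) (h₂ : γ₂ ∈ resolventND μ Φ)
    (hle : γ₁ ≤ γ₂) (hd : dfun μ hgr Φ γ₁ = dfun μ hgr Φ γ₂) {γ : ℝ}
    (hγ₁ : γ₁ ≤ γ) (hγ₂ : γ ≤ γ₂) : γ ∈ resolventND μ Φ := by
  obtain ⟨P₁, K₁, α₁, β₁, θ₁, ν₁, w₁⟩ := h₁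
  obtain ⟨P₂, K₂, α₂, β₂, θ₂, ν₂, w₂⟩ := h₂
  have hUeq : Uc μ hgr Φ γ₁ = Uc μ hgr Φ γ₂ :=
    Submodule.eq_of_le_of_finrank_le (Uc_mono hgr hle) (le_of_eq hd.symm)
  have hr₁ := range_eq hgr hid hcoc w₁
  have hr₂ := range_eq hgr hid hcoc w₂
  have hk₁ := ker_eq hgr hid hcoc w₁
  have hk₂ := ker_eq hgr hid hcoc w₂
  have hrange : LinearMap.range ((P₁ 0) : EuclideanSpace ℝ (Fin n) →ₗ[ℝ] EuclideanSpace ℝ (Fin n)) = LinearMap.range ((P₂ 0) : EuclideanSpace ℝ (Fin n) →ₗ[ℝ] EuclideanSpace ℝ (Fin n)) := by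
    rw [hr₁, hr₂, hUeq]
  have hfr : Module.finrank ℝ (LinearMap.range ((P₁ 0) : EuclideanSpace ℝ (Fin n) →ₗ[ℝ] EuclideanSpace ℝ (Fin n)))
      = Module.finrank ℝ (LinearMap.range ((P₂ 0) : EuclideanSpace ℝ (Fin n) →ₗ[ℝ] EuclideanSpace ℝ (Fin n))) := by rw [hrange]
  have hrn₁ := LinearMap.finrank_range_add_finrank_ker
    ((P₁ 0 : EuclideanSpace ℝ (Fin n) →ₗ[ℝ] EuclideanSpace ℝ (Fin n)))
  have hrn₂ := LinearMap.finrank_range_add_finrank_ker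
    ((P₂ 0 : EuclideanSpace ℝ (Fin n) →ₗ[ℝ] EuclideanSpace ℝ (Fin n)))
  have hcr₁ : LinearMap.range ((P₁ 0 : EuclideanSpace ℝ (Fin n) →ₗ[ℝ] EuclideanSpace ℝ (Fin n)))
      = LinearMap.range ((P₁ 0) : EuclideanSpace ℝ (Fin n) →ₗ[ℝ] EuclideanSpace ℝ (Fin n)) := by rfl
  have hcr₂ : LinearMap.range ((P₂ 0 : EuclideanSpace ℝ (Fin n) →ₗ[ℝ] EuclideanSpace ℝ (Fin n)))
      = LinearMap.range ((P₂ 0) : EuclideanSpace ℝ (Fin n) →ₗ[ℝ] EuclideanSpace ℝ (Fin n)) := by rfl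
  have hck₁ : LinearMap.ker ((P₁ 0 : EuclideanSpace ℝ (Fin n) →ₗ[ℝ] EuclideanSpace ℝ (Fin n)))
      = LinearMap.ker ((P₁ 0) : EuclideanSpace ℝ (Fin n) →ₗ[ℝ] EuclideanSpace ℝ (Fin n)) := by rfl
  have hck₂ : LinearMap.ker ((P₂ 0 : EuclideanSpace ℝ (Fin n) →ₗ[ℝ] EuclideanSpace ℝ (Fin n)))
      = LinearMap.ker ((P₂ 0) : EuclideanSpace ℝ (Fin n) →ₗ[ℝ] EuclideanSpace ℝ (Fin n)) := by rfl
  rw [hcr₁, hck₁] at hrn₁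
  rw [hcr₂, hck₂] at hrn₂
  have hkerrank : Module.finrank ℝ (LinearMap.ker ((P₁ 0) : EuclideanSpace ℝ (Fin n) →ₗ[ℝ] EuclideanSpace ℝ (Fin n)))
      = Module.finrank ℝ (LinearMap.ker ((P₂ 0) : EuclideanSpace ℝ (Fin n) →ₗ[ℝ] EuclideanSpace ℝ (Fin n))) := by omega
  have hker : LinearMap.ker ((P₂ 0) : EuclideanSpace ℝ (Fin n) →ₗ[ℝ] EuclideanSpace ℝ (Fin n)) = LinearMap.ker ((P₁ 0) : EuclideanSpace ℝ (Fin n) →ₗ[ℝ] EuclideanSpace ℝ (Fin n)) := by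
    apply Submodule.eq_of_le_of_finrank_le
    · rw [hk₁, hk₂]; exact Vc_anti hgr hle
    · exact le_of_eq hkerrank
  have hP0 : P₁ 0 = P₂ 0 := proj_eq (w₁.1 0) (w₂.1 0) hrange hker.symm
  have hPfun : P₂ = P₁ := by
    funext t
    rw [conj_P hgr hid hcoc w₁ t, conj_P hgr hid hcoc w₂ t, hP0]
  rw [hPfun] at w₂
  obtain ⟨hproj₁, hinv₁, hK₁, hα₁, hβ₁, hθ₁, hν₁, hαθ₁, hβν₁, hst₁, hun₁⟩ := w₁
  have hαθ₂' := w₂.2.2.2.2.2.2.2.1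
  have hβν₂' := w₂.2.2.2.2.2.2.2.2.1
  exact witness_mix hgr
    ⟨hproj₁, hinv₁, hK₁, hα₁, hβ₁, hθ₁, hν₁, hαθ₁, hβν₁, hst₁, hun₁⟩ w₂
    (by linarith) (by linarith)

lemma F5c (hgr : GrowthRate μ) (hid : ∀ s, Φ s s = 1)
    (hcoc : ∀ t τ s, Φ t τ ∘L Φ τ s = Φ t s)
    {γ : ℝ} (h : γ ∈ resolventND μ Φ) (hd : dfun μ hgr Φ γ = 0)
    {γ' : ℝ} (hle : γ' ≤ γ) : γ' ∈ resolventND μ Φ := by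
  obtain ⟨P, K, α, β, θ, ν, w⟩ := h
  have hU : Uc μ hgr Φ γ = ⊥ := Submodule.finrank_eq_zero.mp hd
  have hrange : LinearMap.range ((P 0) : EuclideanSpace ℝ (Fin n) →ₗ[ℝ] EuclideanSpace ℝ (Fin n)) = ⊥ := by rw [range_eq hgr hid hcoc w, hU]
  have hP0 : P 0 = 0 := by
    apply ContinuousLinearMap.ext
    intro x
    have : P 0 x ∈ LinearMap.range ((P 0) : EuclideanSpace ℝ (Fin n) →ₗ[ℝ] EuclideanSpace ℝ (Fin n)) := LinearMap.mem_range_self _ x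
    rw [hrange] at this
    simpa using this
  have hP : ∀ t, P t = 0 := by
    intro t
    rw [conj_P hgr hid hcoc w t, hP0]
    ext x; simp
  exact res_left hgr hle w hP

lemma F6c (hgr : GrowthRate μ) (hid : ∀ s, Φ s s = 1)
    (hcoc : ∀ t τ s, Φ t τ ∘L Φ τ s = Φ t s)
    {γ : ℝ} (h : γ ∈ resolventND μ Φ) (hd : dfun μ hgr Φ γ = n)
    {γ' : ℝ} (hle : γ ≤ γ') : γ' ∈ resolventND μ Φ := by
  obtain ⟨P, K, α, β, θ, ν, w⟩ := h
  have hU : Uc μ hgr Φ γ = ⊤ := by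
    apply Submodule.eq_top_of_finrank_eq
    rw [finrank_euclideanSpace_fin]
    exact hd
  have hrange : LinearMap.range ((P 0) : EuclideanSpace ℝ (Fin n) →ₗ[ℝ] EuclideanSpace ℝ (Fin n)) = ⊤ := by rw [range_eq hgr hid hcoc w, hU]
  have hP0 : P 0 = 1 := by
    apply ContinuousLinearMap.ext
    intro x
    have hx : x ∈ LinearMap.range ((P 0) : EuclideanSpace ℝ (Fin n) →ₗ[ℝ] EuclideanSpace ℝ (Fin n)) := by rw [hrange]; trivial
    obtain ⟨y, hy⟩ := hx
    have hyy : P 0 (P 0 y) = P 0 y := by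
      have := congrArg (fun F : Op n => F y) (w.1 0)
      simpa using this
    calc P 0 x = P 0 (P 0 y) := congrArg (P 0) hy.symm
      _ = P 0 y := hyy
      _ = x := hy
    -- goal : P 0 x = (1 : Op n) x
  have hP : ∀ t, P t = 1 := by
    intro t
    rw [conj_P hgr hid hcoc w t, hP0]
    have h4 : Φ t 0 ∘L Φ 0 t = 1 := by rw [hcoc t 0 t, hid t]
    calc Φ t 0 ∘L ((1 : Op n) ∘L Φ 0 t) = Φ t 0 ∘L Φ 0 t := by
          congr 1
      _ = 1 := h4
  exact res_right hgr hle w hP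

lemma abstract_decomp (n : ℕ) (S : Set ℝ) (hS : IsClosed S) (d : ℝ → ℕ)
    (hmono : Monotone d) (hdn : ∀ x, d x ≤ n)
    (h4 : ∀ ⦃a b : ℝ⦄, a ∉ S → b ∉ S → a ≤ b → d a = d b →
      ∀ ⦃x : ℝ⦄, a ≤ x → x ≤ b → x ∉ S)
    (h5 : ∀ ⦃a : ℝ⦄, a ∉ S → d a = 0 → ∀ ⦃x : ℝ⦄, x ≤ a → x ∉ S)
    (h6 : ∀ ⦃a : ℝ⦄, a ∉ S → d a = n → ∀ ⦃x : ℝ⦄, a ≤ x → x ∉ S)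
    (hn0 : n = 0 → S = ∅) :
    ∃ m : ℕ, m ≤ n ∧ ∃ I : Fin m → Set ℝ,
      (S = ⋃ i, I i) ∧
      (∀ i, IsClosed (I i)) ∧
      (∀ i, (I i).Nonempty) ∧
      (∀ i, (I i).OrdConnected) ∧
      (∀ i j : Fin m, i < j → ∀ x ∈ I i, ∀ y ∈ I j, x < y) ∧
      (∀ i : Fin m, (i : ℕ) ≠ 0 → BddBelow (I i)) ∧
      (∀ i : Fin m, (i : ℕ) ≠ m - 1 → BddAbove (I i)) := by
  rcases Set.eq_empty_or_nonempty S with hSe | hSne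
  · refine ⟨0, Nat.zero_le n, Fin.elim0, ?_, fun i => i.elim0, fun i => i.elim0,
      fun i => i.elim0, fun i => i.elim0, fun i => i.elim0, fun i => i.elim0⟩
    rw [hSe]
    exact (Set.iUnion_of_empty _).symm
  · have hn : 0 < n := by
      rcases Nat.eq_zero_or_pos n with h | h
      · exact absurd (hn0 h ▸ hSne) (by simp)
      · exact h
    set F : ℝ → Set ℕ := fun x => insert 0 (d '' {r | r ∉ S ∧ r < x}) with hF
    have hFne : ∀ x, (F x).Nonempty := fun x => ⟨0, Set.mem_insert _ _⟩
    have hFbdd : ∀ x, BddAbove (F x) := by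
      intro x
      refine ⟨n, ?_⟩
      rintro a (rfl | ⟨r, _, rfl⟩)
      · exact Nat.zero_le n
      · exact hdn r
    set f : ℝ → ℕ := fun x => sSup (F x) with hf
    have hfmono : Monotone f := by
      intro x y hxy
      apply csSup_le_csSup (hFbdd y) (hFne x)
      apply Set.insert_subset_insert
      apply Set.image_mono
      intro r hr
      exact ⟨hr.1, lt_of_lt_of_le hr.2 hxy⟩
    have hP2 : ∀ {x r : ℝ}, r ∉ S → r < x → d r ≤ f x := by
      intro x r hr hrx
      exact le_csSup (hFbdd x) (Set.mem_insert_of_mem _ ⟨r, ⟨hr, hrx⟩, rfl⟩)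
    have hP1 : ∀ {x r : ℝ}, x ∈ S → r ∉ S → x < r → f x < d r := by
      intro x r hx hr hxr
      have hmem : f x ∈ F x := Nat.sSup_mem (hFne x) (hFbdd x)
      rcases hmem with h0 | ⟨r', ⟨hr', hr'x⟩, hdr'⟩
      · have hdr : d r ≠ 0 := fun hz => (h5 hr hz (le_of_lt hxr)) hx
        have h0' : f x = 0 := h0
        omega
      · have hne : d r' ≠ d r := fun he =>
          (h4 hr' hr (by linarith) he (le_of_lt hr'x) (le_of_lt hxr)) hx
        have hle : d r' ≤ d r := hmono (by linarith)
        omega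
    have hP4 : ∀ {x : ℝ}, x ∈ S → f x < n := by
      intro x hx
      have hmem : f x ∈ F x := Nat.sSup_mem (hFne x) (hFbdd x)
      rcases hmem with h0 | ⟨r, ⟨hr, hrx⟩, hdr⟩
      · rw [← h0] at hn; omega
      · have : d r ≠ n := fun he => (h6 hr he (le_of_lt hrx)) hx
        have := hdn r
        omega
    have hP3 : ∀ {x y z : ℝ}, x ∈ S → y ∈ S → f x = f y → x ≤ z → z ≤ y →
        z ∈ S ∧ f z = f x := by
      intro x y z hx hy hfxy hxz hzy
      have hzS : z ∈ S := by
        by_contra hz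
        have hxz' : x < z := lt_of_le_of_ne hxz (fun he => hz (he ▸ hx))
        have hzy' : z < y := lt_of_le_of_ne hzy (fun he => (he ▸ hz) hy)
        have := hP1 hx hz hxz'
        have := hP2 hz hzy'
        omega
      refine ⟨hzS, le_antisymm ?_ (hfmono hxz)⟩
      rw [hfxy]
      exact hfmono hzy
    classical
    set V : Finset ℕ := (Finset.range n).filter (fun k => ∃ x, x ∈ S ∧ f x = k) with hV
    set m := V.card with hm
    have hmn : m ≤ n := by
      calc m ≤ (Finset.range n).card := Finset.card_filter_le _ _
        _ = n := Finset.card_range n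
    set e := V.orderIsoOfFin rfl with he
    refine ⟨m, hmn, fun i => {x | x ∈ S ∧ f x = (e i : ℕ)}, ?_, ?_, ?_, ?_, ?_, ?_, ?_⟩
    · -- union
      ext x
      simp only [Set.mem_iUnion, Set.mem_setOf_eq]
      constructor
      · intro hx
        have hfx : f x ∈ V := by
          rw [hV]
          simp only [Finset.mem_filter, Finset.mem_range]
          exact ⟨hP4 hx, x, hx, rfl⟩
        refine ⟨e.symm ⟨f x, hfx⟩, hx, ?_⟩
        rw [e.apply_symm_apply]
      · rintro ⟨i, hx, _⟩
        exact hx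
    · -- closed
      intro i
      set k := (e i : ℕ) with hk
      set J : Set ℝ := {x | x ∈ S ∧ f x = k} with hJ
      have hJS : J ⊆ S := fun _ h => h.1
      have hJk : ∀ y ∈ J, f y = k := fun _ h => h.2
      apply isClosed_of_closure_subset
      intro x hx
      have hxS : x ∈ S := hS.closure_subset (closure_mono hJS hx)
      have hJne : J.Nonempty := by
        have hiV : (e i : ℕ) ∈ V := (e i).2
        simp only [hV, Finset.mem_filter, Finset.mem_range] at hiV
        obtain ⟨_, z, hz, hfz⟩ := hiV
        exact ⟨z, hz, hfz⟩
      by_cases hb : ∃ y ∈ J, y ≤ x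
      · by_cases ha : ∃ y ∈ J, x ≤ y
        · obtain ⟨y₁, hy₁, hy₁x⟩ := hb
          obtain ⟨y₂, hy₂, hxy₂⟩ := ha
          have := hP3 hy₁.1 hy₂.1 (by rw [hy₁.2, hy₂.2]) hy₁x hxy₂
          exact ⟨this.1, by rw [this.2, hy₁.2]⟩
        · -- all of J is ≤ x (in fact < or ≤); x is a right endpoint
          obtain ⟨y, hyJ, hyx⟩ := hb
          have hk_le : k ≤ f x := by rw [← hyJ.2]; exact hfmono hyx
          have hfx_le : f x ≤ k := by
            apply csSup_le (hFne x)
            rintro a (rfl | ⟨r, ⟨hr, hrx⟩, rfl⟩)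
            · exact Nat.zero_le k
            · have hry : ∃ y' ∈ J, r < y' := by
                by_contra hcon
                push_neg at hcon
                have hsub : J ⊆ Set.Iic r := fun y' hy' => hcon y' hy'
                have : x ∈ Set.Iic r := isClosed_Iic.closure_subset (closure_mono hsub hx)
                exact absurd hrx (by simpa using this)
              obtain ⟨y', hy'J, hry'⟩ := hry
              have := hP2 hr hry'
              rw [hy'J.2] at this
              exact this
          exact ⟨hxS, le_antisymm hfx_le hk_le⟩
      · push_neg at hb
        obtain ⟨y₀, hy₀⟩ := hJne
        have hxy₀ : x ≤ y₀ := le_of_lt (hb y₀ hy₀)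
        have hfx_le : f x ≤ k := by rw [← hy₀.2]; exact hfmono hxy₀
        have hsub : ∀ z, x < z → z ≤ y₀ → z ∈ J := by
          intro z hxz hzy
          obtain ⟨y', hy'J, hy'z⟩ : ∃ y' ∈ J, y' < z := by
            by_contra hcon
            push_neg at hcon
            have hsub2 : J ⊆ Set.Ici z := fun y' hy' => hcon y' hy'
            have : x ∈ Set.Ici z := isClosed_Ici.closure_subset (closure_mono hsub2 hx)
            have : z ≤ x := by simpa using this
            linarith
          have := hP3 hy'J.1 hy₀.1 (by rw [hy'J.2, hy₀.2]) (le_of_lt hy'z) hzy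
          exact ⟨this.1, by rw [this.2, hy'J.2]⟩
        have hk_le : k ≤ f x := by
          have hmem : f y₀ ∈ F y₀ := Nat.sSup_mem (hFne y₀) (hFbdd y₀)
          rcases hmem with h0 | ⟨r, ⟨hr, hry⟩, hdr⟩
          · have : k = 0 := by rw [← hy₀.2, ← h0]
            omega
          · have hkdr : k = d r := by rw [← hy₀.2, ← hdr]
            have hrx : r < x := by
              rcases lt_trichotomy r x with h | h | h
              · exact h
              · exact absurd (h ▸ hxS) hr
              · exact absurd ((hsub r h (le_of_lt hry)).1) hr
            rw [hkdr]
            exact hP2 hr hrx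
        exact ⟨hxS, le_antisymm hfx_le hk_le⟩
    · -- nonempty
      intro i
      have hiV : (e i : ℕ) ∈ V := (e i).2
      simp only [hV, Finset.mem_filter, Finset.mem_range] at hiV
      obtain ⟨_, x, hx, hfx⟩ := hiV
      exact ⟨x, hx, hfx⟩
    · -- ordConnected
      intro i
      constructor
      intro x hx y hy z hz
      have := hP3 hx.1 hy.1 (by rw [hx.2, hy.2]) hz.1 hz.2
      exact ⟨this.1, by rw [this.2, hx.2]⟩
    · -- ordering
      intro i j hij x hx y hy
      have hkij : (e i : ℕ) < (e j : ℕ) := by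
        have : e i < e j := e.strictMono hij
        exact this
      by_contra hcon
      push_neg at hcon
      have : f y ≤ f x := hfmono hcon
      rw [hx.2, hy.2] at this
      omega
    · -- BddBelow
      intro i hi
      have hpos : 0 < m := i.pos
      set i0 : Fin m := ⟨0, hpos⟩ with hi0
      have hlt : i0 < i := by
        rw [Fin.lt_def]
        exact Nat.pos_of_ne_zero hi
      have hne0 : {x | x ∈ S ∧ f x = (e i0 : ℕ)}.Nonempty := by
        have hiV : (e i0 : ℕ) ∈ V := (e i0).2
        simp only [hV, Finset.mem_filter, Finset.mem_range] at hiV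
        obtain ⟨_, x, hx, hfx⟩ := hiV
        exact ⟨x, hx, hfx⟩
      obtain ⟨y, hy⟩ := hne0
      refine ⟨y, fun x hx => ?_⟩
      have hkij : (e i0 : ℕ) < (e i : ℕ) := e.strictMono hlt
      by_contra hcon
      push_neg at hcon
      have : f x ≤ f y := hfmono (le_of_lt hcon)
      rw [hx.2, hy.2] at this
      omega
    · -- BddAbove
      intro i hi
      have hpos : 0 < m := i.pos
      set i1 : Fin m := ⟨m - 1, by omega⟩ with hi1
      have hlt : i < i1 := by
        rw [Fin.lt_def]
        have := i.isLt
        simp only [hi1]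
        omega
      have hne1 : {x | x ∈ S ∧ f x = (e i1 : ℕ)}.Nonempty := by
        have hiV : (e i1 : ℕ) ∈ V := (e i1).2
        simp only [hV, Finset.mem_filter, Finset.mem_range] at hiV
        obtain ⟨_, x, hx, hfx⟩ := hiV
        exact ⟨x, hx, hfx⟩
      obtain ⟨y, hy⟩ := hne1
      refine ⟨y, fun x hx => ?_⟩
      have hkij : (e i : ℕ) < (e i1 : ℕ) := e.strictMono hlt
      by_contra hcon
      push_neg at hcon
      have : f y ≤ f x := hfmono (le_of_lt hcon)
      rw [hx.2, hy.2] at this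
      omega

lemma res_all_zero (hgr : GrowthRate μ) (hn : n = 0) (γ : ℝ) :
    γ ∈ resolventND μ Φ := by
  subst hn
  haveI : Unique (EuclideanSpace ℝ (Fin 0)) :=
    inferInstance
  have hzero : ∀ f : Op 0, f = 0 := by
    intro f
    apply ContinuousLinearMap.ext
    intro x
    exact Subsingleton.elim _ _
  refine ⟨fun _ => 1, 1, -1, 1, 0, 0, fun t => ?_, fun t s => ?_, le_rfl, by norm_num,
    by norm_num, le_rfl, le_rfl, by norm_num, by norm_num, ?_, ?_⟩
  · rw [hzero ((1 : Op 0) ∘L (1 : Op 0)), hzero (1 : Op 0)]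
  · rw [hzero ((1:Op 0) ∘L shiftEvo μ γ Φ t s), hzero (shiftEvo μ γ Φ t s ∘L (1:Op 0))]
  · intro t s _
    have hx := gr_div_pos hgr t s
    have hμs := gr_pos hgr s
    rw [hzero (shiftEvo μ γ Φ t s ∘L (1 : Op 0)), norm_zero]
    apply mul_nonneg (mul_nonneg (by norm_num) (Real.rpow_nonneg (le_of_lt hx) _))
      (Real.rpow_nonneg (le_of_lt hμs) _)
  · intro t s _
    have hx := gr_div_pos hgr t s
    have hμs := gr_pos hgr s
    rw [hzero (shiftEvo μ γ Φ t s ∘L (1 - (1 : Op 0))), norm_zero]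
    apply mul_nonneg (mul_nonneg (by norm_num) (Real.rpow_nonneg (le_of_lt hx) _))
      (Real.rpow_nonneg (le_of_lt hμs) _)

end Stmt11Aux

open Stmt11Aux in
/-- the nonuniform μ-dichotomy spectrum is the union of m ≤ n disjoint
nonempty closed intervals, ordered, all bounded except possibly the first one below
and the last one above. -/
theorem stmt11 (n : ℕ) (A : ℝ → Op n) (hA : Continuous A)
    (Φ : ℝ → ℝ → Op n) (hΦ : IsEvolutionOp A Φ)
    (μ : ℝ → ℝ) (hgr : GrowthRate μ) (hdiff : Differentiable ℝ μ) :
    ∃ m : ℕ, m ≤ n ∧ ∃ I : Fin m → Set ℝ,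
      (spectrumND μ Φ = ⋃ i, I i) ∧
      (∀ i, IsClosed (I i)) ∧
      (∀ i, (I i).Nonempty) ∧
      (∀ i, (I i).OrdConnected) ∧
      (∀ i j : Fin m, i < j → ∀ x ∈ I i, ∀ y ∈ I j, x < y) ∧
      (∀ i : Fin m, (i : ℕ) ≠ 0 → BddBelow (I i)) ∧
      (∀ i : Fin m, (i : ℕ) ≠ m - 1 → BddAbove (I i)) := by
  obtain ⟨hid, hcoc, -⟩ := hΦ
  have hmemr : ∀ γ : ℝ, γ ∉ spectrumND μ Φ ↔ γ ∈ resolventND μ Φ := by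
    intro γ
    simp [spectrumND]
  apply abstract_decomp n (spectrumND μ Φ) ((res_open hgr).isClosed_compl) (dfun μ hgr Φ)
    (dfun_mono hgr) (dfun_le hgr)
  · intro a b ha hb hab hd x hax hxb
    rw [hmemr] at *
    exact F4c hgr hid hcoc ha hb hab hd hax hxb
  · intro a ha hd x hxa
    rw [hmemr]
    exact F5c hgr hid hcoc ((hmemr a).mp ha) hd hxa
    
  · intro a ha hd x hax
    rw [hmemr]
    exact F6c hgr hid hcoc ((hmemr a).mp ha) hd hax
  · intro hn
    rw [Set.eq_empty_iff_forall_notMem]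
    intro γ hγ
    rw [spectrumND, Set.mem_compl_iff] at hγ
    exact hγ (res_all_zero hgr hn γ)
end
end

section
/- If the shifted system x' = (A(t) − γ₀ μ'(t)/μ(t) I)x admits a nonuniform μ-dichotomy with invariant projection P ≡ I (identity), then x' = (A(t) − γ μ'(t)/μ(t) I)x admits a nonuniform μ-dichotomy with projection P ≡ I for every γ > γ₀; consequently (γ₀, ∞) ⊆ ρ^{ND}_μ(A). -/
open Filter Topology

noncomputable section

/-- if the γ₀-shifted system has a nonuniform μ-dichotomy with projection
P ≡ I, then so does the γ-shifted system for every γ > γ₀; hence (γ₀,∞) ⊆ ρ^{ND}_μ(A). -/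
theorem stmt12 (n : ℕ) (A : ℝ → Op n) (hA : Continuous A)
    (Φ : ℝ → ℝ → Op n) (hΦ : IsEvolutionOp A Φ)
    (μ : ℝ → ℝ) (hgr : GrowthRate μ) (hdiff : Differentiable ℝ μ)
    (γ₀ : ℝ) (K α β θ ν : ℝ)
    (h : NuDWith μ (shiftEvo μ γ₀ Φ) (fun _ => (1 : Op n)) K α β θ ν) :
    (∀ γ : ℝ, γ₀ < γ →
      ∃ K' α' β' θ' ν', NuDWith μ (shiftEvo μ γ Φ) (fun _ => (1 : Op n)) K' α' β' θ' ν') ∧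
    Set.Ioi γ₀ ⊆ resolventND μ Φ := by
  obtain ⟨hP, hcomm, hK, hα, hβ, hθ, hν, hαθ, hβν, hbd1, hbd2⟩ := h
  have hμ := hgr.2.1
  have main : ∀ γ : ℝ, γ₀ < γ →
      ∃ K' α' β' θ' ν', NuDWith μ (shiftEvo μ γ Φ) (fun _ => (1 : Op n)) K' α' β' θ' ν' := by
    intro γ hγ
    refine ⟨K, α + γ₀ - γ, β, θ, ν, ?_, ?_, hK, by linarith, hβ, hθ, hν, by linarith, hβν,
      ?_, ?_⟩
    · intro t
      simp only [ContinuousLinearMap.one_def, ContinuousLinearMap.comp_id]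
    · intro t s
      simp only [ContinuousLinearMap.one_def, ContinuousLinearMap.comp_id,
        ContinuousLinearMap.id_comp]
    · intro t s hst
      have hbase : 0 < μ t / μ s := div_pos (hμ t) (hμ s)
      have key : shiftEvo μ γ Φ t s = (μ t / μ s) ^ (γ₀ - γ) • shiftEvo μ γ₀ Φ t s := by
        simp only [shiftEvo, smul_smul]
        rw [← Real.rpow_add hbase]
        ring_nf
      have hb1 := hbd1 t s hst
      simp only [ContinuousLinearMap.one_def, ContinuousLinearMap.comp_id] at hb1 ⊢
      rw [key]
      rw [show ‖(μ t / μ s) ^ (γ₀ - γ) • shiftEvo μ γ₀ Φ t s‖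
          = (μ t / μ s) ^ (γ₀ - γ) * ‖shiftEvo μ γ₀ Φ t s‖ from by
        have hns := norm_smul ((μ t / μ s) ^ (γ₀ - γ)) (shiftEvo μ γ₀ Φ t s)
        rw [Real.norm_eq_abs, abs_of_pos (Real.rpow_pos_of_pos hbase _)] at hns
        exact hns]
      have hc : (0:ℝ) ≤ (μ t / μ s) ^ (γ₀ - γ) := (Real.rpow_pos_of_pos hbase _).le
      calc (μ t / μ s) ^ (γ₀ - γ) * ‖shiftEvo μ γ₀ Φ t s‖
          ≤ (μ t / μ s) ^ (γ₀ - γ) * (K * (μ t / μ s) ^ α * μ s ^ (Real.sign s * θ)) :=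
            mul_le_mul_of_nonneg_left hb1 hc
        _ = K * (μ t / μ s) ^ (α + γ₀ - γ) * μ s ^ (Real.sign s * θ) := by
            rw [show α + γ₀ - γ = γ₀ - γ + α by ring, Real.rpow_add hbase]; ring
    · intro t s hts
      have hbase : 0 < μ t / μ s := div_pos (hμ t) (hμ s)
      simp only [sub_self, ContinuousLinearMap.comp_zero, norm_zero]
      have h1 : (0:ℝ) < (μ t / μ s) ^ β := Real.rpow_pos_of_pos hbase _
      have h2 : (0:ℝ) < μ s ^ (Real.sign s * ν) := Real.rpow_pos_of_pos (hμ s) _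
      positivity
  refine ⟨main, ?_⟩
  intro γ hγ
  obtain ⟨K', α', β', θ', ν', h'⟩ := main γ hγ
  exact ⟨fun _ => 1, K', α', β', θ', ν', h'⟩
end
end

section
/- If the evolution operator Φ of x' = A(t)x has nonuniformly bounded growth with respect to (μ,ε), i.e. ‖Φ(t,s)‖ ≤ K (μ(t)/μ(s))^{sign(t−s)a} μ(s)^{sign(s)ε} for all t,s ∈ ℝ with some K ≥ 1, a ≥ 0, ε ≥ 0, then the nonuniform μ-dichotomy spectrum satisfies Σ^{ND}_μ(A) ⊆ [−a−ε, a+ε]; in particular Σ^{ND}_μ(A) is bounded. -/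
open Filter Topology

noncomputable section

lemma sign_bounds (r : ℝ) : -1 ≤ Real.sign r ∧ Real.sign r ≤ 1 := by
  rcases Real.sign_apply_eq r with h | h | h <;> rw [h] <;> norm_num

set_option maxHeartbeats 1000000 in
set_option synthInstance.maxHeartbeats 200000 in
/-- nonuniformly bounded growth w.r.t. (μ,ε) implies
Σ^{ND}_μ(A) ⊆ [-a-ε, a+ε]; in particular the spectrum is bounded. -/
theorem stmt13 (n : ℕ) (A : ℝ → Op n) (hA : Continuous A)
    (Φ : ℝ → ℝ → Op n) (hΦ : IsEvolutionOp A Φ)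
    (μ : ℝ → ℝ) (hgr : GrowthRate μ) (hdiff : Differentiable ℝ μ)
    (K a ε : ℝ) (hK : 1 ≤ K) (ha : 0 ≤ a) (hε : 0 ≤ ε)
    (hbg : ∀ t s : ℝ, ‖Φ t s‖ ≤
      K * (μ t / μ s) ^ (Real.sign (t - s) * a) * μ s ^ (Real.sign s * ε)) :
    spectrumND μ Φ ⊆ Set.Icc (-(a + ε)) (a + ε) ∧
    Bornology.IsBounded (spectrumND μ Φ) := by
  obtain ⟨hmono, hpos, -, -, -⟩ := hgr
  have hbase : ∀ t s : ℝ, 0 < μ t / μ s := fun t s => div_pos (hpos t) (hpos s)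
  have hnorm : ∀ (γ t s : ℝ), ‖shiftEvo μ γ Φ t s‖ = (μ t / μ s) ^ (-γ) * ‖Φ t s‖ := by
    intro γ t s
    have h := norm_smul ((μ t / μ s) ^ (-γ)) (Φ t s)
    rw [Real.norm_eq_abs, abs_of_pos (Real.rpow_pos_of_pos (hbase t s) _)] at h
    exact h
  have hsubset : spectrumND μ Φ ⊆ Set.Icc (-(a + ε)) (a + ε) := by
    intro γ hγ
    by_contra hmem
    apply hγ
    rw [Set.mem_Icc, not_and_or] at hmem
    have h0K : (0:ℝ) < K := lt_of_lt_of_le one_pos hK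
    rcases hmem with h | h
    · push_neg at h
      have hγ' : γ < -(a + ε) := by linarith
      refine ⟨fun _ => 0, K, -1, -γ - a, 0, ε, ?_, ?_, hK, by norm_num,
        by linarith, le_refl 0, hε, by norm_num, by linarith, ?_, ?_⟩
      · intro t
        simp only [ContinuousLinearMap.comp_zero]
      · intro t s
        simp only [ContinuousLinearMap.comp_zero, ContinuousLinearMap.zero_comp]
      · intro t s _
        have hps := hpos s
        have hpt := hpos t
        simp only [ContinuousLinearMap.comp_zero, norm_zero]
        positivity
      · intro t s hts
        simp only [sub_zero, ContinuousLinearMap.one_def, ContinuousLinearMap.comp_id, hnorm]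
        have h1 : ‖Φ t s‖ ≤ K * (μ t / μ s) ^ (Real.sign (t - s) * a) *
            μ s ^ (Real.sign s * ε) := hbg t s
        have h2 : (μ t / μ s) ^ (-γ) * ‖Φ t s‖ ≤ (μ t / μ s) ^ (-γ) *
            (K * (μ t / μ s) ^ (Real.sign (t - s) * a) * μ s ^ (Real.sign s * ε)) :=
          mul_le_mul_of_nonneg_left h1 (le_of_lt (Real.rpow_pos_of_pos (hbase t s) _))
        refine h2.trans ?_
        have hble : μ t / μ s ≤ 1 := by
          rw [div_le_one (hpos s)]
          exact (hmono.le_iff_le).mpr hts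
        have hexp : -γ - a ≤ -γ + Real.sign (t - s) * a := by
          have : -a ≤ Real.sign (t - s) * a := by
            have := (sign_bounds (t - s)).1
            nlinarith
          linarith
        have h3 : (μ t / μ s) ^ (-γ) * (μ t / μ s) ^ (Real.sign (t - s) * a)
            ≤ (μ t / μ s) ^ (-γ - a) := by
          rw [← Real.rpow_add (hbase t s)]
          exact Real.rpow_le_rpow_of_exponent_ge (hbase t s) hble hexp
        calc (μ t / μ s) ^ (-γ) * (K * (μ t / μ s) ^ (Real.sign (t - s) * a) *
              μ s ^ (Real.sign s * ε))
            = ((μ t / μ s) ^ (-γ) * (μ t / μ s) ^ (Real.sign (t - s) * a)) *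
              (K * μ s ^ (Real.sign s * ε)) := by ring
          _ ≤ (μ t / μ s) ^ (-γ - a) * (K * μ s ^ (Real.sign s * ε)) := by
              refine mul_le_mul_of_nonneg_right h3 ?_
              have hps := hpos s
              positivity
          _ = K * (μ t / μ s) ^ (-γ - a) * μ s ^ (Real.sign s * ε) := by ring
    · push_neg at h
      have hγ' : a + ε < γ := h
      refine ⟨fun _ => 1, K, a - γ, 1, ε, 0, ?_, ?_, hK, by linarith,
        one_pos, hε, le_refl 0, by linarith, by norm_num, ?_, ?_⟩
      · intro t
        simp only [ContinuousLinearMap.one_def, ContinuousLinearMap.comp_id]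
      · intro t s
        simp only [ContinuousLinearMap.one_def, ContinuousLinearMap.comp_id,
          ContinuousLinearMap.id_comp]
      · intro t s hts
        simp only [ContinuousLinearMap.one_def, ContinuousLinearMap.comp_id, hnorm]
        have h1 := hbg t s
        have h2 : (μ t / μ s) ^ (-γ) * ‖Φ t s‖ ≤ (μ t / μ s) ^ (-γ) *
            (K * (μ t / μ s) ^ (Real.sign (t - s) * a) * μ s ^ (Real.sign s * ε)) :=
          mul_le_mul_of_nonneg_left h1 (le_of_lt (Real.rpow_pos_of_pos (hbase t s) _))
        refine h2.trans ?_
        have hble : 1 ≤ μ t / μ s := by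
          rw [le_div_iff₀ (hpos s), one_mul]
          exact (hmono.le_iff_le).mpr hts
        have hexp : -γ + Real.sign (t - s) * a ≤ a - γ := by
          have : Real.sign (t - s) * a ≤ a := by
            have := (sign_bounds (t - s)).2
            nlinarith
          linarith
        have h3 : (μ t / μ s) ^ (-γ) * (μ t / μ s) ^ (Real.sign (t - s) * a)
            ≤ (μ t / μ s) ^ (a - γ) := by
          rw [← Real.rpow_add (hbase t s)]
          exact Real.rpow_le_rpow_of_exponent_le hble hexp
        calc (μ t / μ s) ^ (-γ) * (K * (μ t / μ s) ^ (Real.sign (t - s) * a) *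
              μ s ^ (Real.sign s * ε))
            = ((μ t / μ s) ^ (-γ) * (μ t / μ s) ^ (Real.sign (t - s) * a)) *
              (K * μ s ^ (Real.sign s * ε)) := by ring
          _ ≤ (μ t / μ s) ^ (a - γ) * (K * μ s ^ (Real.sign s * ε)) := by
              refine mul_le_mul_of_nonneg_right h3 ?_
              have hps := hpos s
              positivity
          _ = K * (μ t / μ s) ^ (a - γ) * μ s ^ (Real.sign s * ε) := by ring
      · intro t s _
        have hps := hpos s
        have hpt := hpos t
        rw [sub_self, ContinuousLinearMap.comp_zero, norm_zero]
        positivity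
  exact ⟨hsubset, (Metric.isBounded_Icc _ _).subset hsubset⟩
end
end

section
/- Let P₀ ∈ Mₙ(ℝ) be a symmetric projection and X : ℝ → GLₙ(ℝ). For each t, the matrix Q(t) = P₀ X(t)ᵀX(t) P₀ + (I−P₀) X(t)ᵀX(t) (I−P₀) is symmetric positive definite, and there is a unique symmetric positive definite R(t) with R(t)² = Q(t) and P₀R(t) = R(t)P₀. Moreover S(t) = X(t)R(t)⁻¹ is invertible, S(t)P₀S(t)⁻¹ = X(t)P₀X(t)⁻¹, ‖S(t)‖ ≤ √2, and ‖S(t)⁻¹‖ ≤ √(‖X(t)P₀X(t)⁻¹‖² + ‖X(t)(I−P₀)X(t)⁻¹‖²). -/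
open Matrix

noncomputable section

/-- The operator norm of a real square matrix, induced by the Euclidean norm on ℝⁿ. -/
def opN {n : ℕ} (M : Matrix (Fin n) (Fin n) ℝ) : ℝ :=
  ‖(Matrix.toEuclideanCLM (𝕜 := ℝ) (n := Fin n) M :
      EuclideanSpace ℝ (Fin n) →L[ℝ] EuclideanSpace ℝ (Fin n))‖

open scoped RealInnerProductSpace
open scoped MatrixOrder

private lemma sq_norm_clm_apply {n : ℕ} (M : Matrix (Fin n) (Fin n) ℝ)
    (v : EuclideanSpace ℝ (Fin n)) :
    ‖toEuclideanCLM (𝕜 := ℝ) M v‖ ^ 2 = ⟪toEuclideanCLM (𝕜 := ℝ) (Mᴴ * M) v, v⟫ := by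
  have h1 : toEuclideanCLM (𝕜 := ℝ) (Mᴴ * M)
      = star (toEuclideanCLM (𝕜 := ℝ) M) * toEuclideanCLM (𝕜 := ℝ) M := by
    rw [_root_.map_mul]
    congr 1
    rw [← Matrix.star_eq_conjTranspose, map_star]
  rw [h1, ContinuousLinearMap.mul_apply, ContinuousLinearMap.star_eq_adjoint,
    ContinuousLinearMap.adjoint_inner_left, real_inner_self_eq_norm_sq]

private lemma opN_le_sqrt {n : ℕ} (M : Matrix (Fin n) (Fin n) ℝ) (c : ℝ) (hc : 0 ≤ c)
    (h : ∀ v : EuclideanSpace ℝ (Fin n), ‖toEuclideanCLM (𝕜 := ℝ) M v‖ ^ 2 ≤ c * ‖v‖ ^ 2) :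
    opN M ≤ Real.sqrt c := by
  apply ContinuousLinearMap.opNorm_le_bound _ (Real.sqrt_nonneg c)
  intro v
  calc ‖toEuclideanCLM (𝕜 := ℝ) M v‖
      = Real.sqrt (‖toEuclideanCLM (𝕜 := ℝ) M v‖ ^ 2) := (Real.sqrt_sq (norm_nonneg _)).symm
    _ ≤ Real.sqrt (c * ‖v‖ ^ 2) := Real.sqrt_le_sqrt (h v)
    _ = Real.sqrt c * ‖v‖ := by
        rw [Real.sqrt_mul hc, Real.sqrt_sq (norm_nonneg _)]

private lemma dot_conjTranspose_mul_self {n : ℕ} (A : Matrix (Fin n) (Fin n) ℝ) (x : Fin n → ℝ) :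
    star x ⬝ᵥ (Aᴴ * A) *ᵥ x = star (A *ᵥ x) ⬝ᵥ (A *ᵥ x) := by
  rw [← mulVec_mulVec, dotProduct_mulVec, vecMul_conjTranspose, star_star]

/-- for a symmetric projection P₀ and invertible X(t), the matrix
Q(t) = P₀X(t)ᵀX(t)P₀ + (I-P₀)X(t)ᵀX(t)(I-P₀) is symmetric positive definite, with a
unique symmetric positive definite square root R(t) commuting with P₀; and
S(t) = X(t)R(t)⁻¹ is invertible with S(t)P₀S(t)⁻¹ = X(t)P₀X(t)⁻¹, ‖S(t)‖ ≤ √2 and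
‖S(t)⁻¹‖ ≤ √(‖X(t)P₀X(t)⁻¹‖² + ‖X(t)(I-P₀)X(t)⁻¹‖²). -/
theorem stmt17 (n : ℕ) (P₀ : Matrix (Fin n) (Fin n) ℝ)
    (hproj : P₀ * P₀ = P₀) (hsym : P₀ᵀ = P₀)
    (X : ℝ → Matrix (Fin n) (Fin n) ℝ) (hX : ∀ t, IsUnit (X t)) (t : ℝ) :
    (P₀ * (X t)ᵀ * X t * P₀ + (1 - P₀) * (X t)ᵀ * X t * (1 - P₀)).PosDef ∧
    (∃! R : Matrix (Fin n) (Fin n) ℝ, R.PosDef ∧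
        R * R = P₀ * (X t)ᵀ * X t * P₀ + (1 - P₀) * (X t)ᵀ * X t * (1 - P₀) ∧
        P₀ * R = R * P₀) ∧
    (∀ R : Matrix (Fin n) (Fin n) ℝ, R.PosDef →
        R * R = P₀ * (X t)ᵀ * X t * P₀ + (1 - P₀) * (X t)ᵀ * X t * (1 - P₀) →
        P₀ * R = R * P₀ →
        IsUnit (X t * R⁻¹) ∧
        (X t * R⁻¹) * P₀ * (X t * R⁻¹)⁻¹ = X t * P₀ * (X t)⁻¹ ∧
        opN (X t * R⁻¹) ≤ Real.sqrt 2 ∧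
        opN ((X t * R⁻¹)⁻¹) ≤
          Real.sqrt (opN (X t * P₀ * (X t)⁻¹) ^ 2 + opN (X t * (1 - P₀) * (X t)⁻¹) ^ 2)) := by
  set M := X t with hM
  have hMu : IsUnit M := hX t
  have hMdet : IsUnit M.det := (Matrix.isUnit_iff_isUnit_det M).mp hMu
  have hMinv : M⁻¹ * M = 1 := Matrix.nonsing_inv_mul M hMdet
  have hMinv' : M * M⁻¹ = 1 := Matrix.mul_nonsing_inv M hMdet
  have hsymh : P₀ᴴ = P₀ := by rwa [conjTranspose_eq_transpose_of_trivial]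
  set Q : Matrix (Fin n) (Fin n) ℝ :=
    P₀ * Mᵀ * M * P₀ + (1 - P₀) * Mᵀ * M * (1 - P₀) with hQ
  -- Q as a sum of conjTranspose * self
  have hQeq : Q = (M * P₀)ᴴ * (M * P₀) + (M * (1 - P₀))ᴴ * (M * (1 - P₀)) := by
    simp only [conjTranspose_eq_transpose_of_trivial, transpose_mul, transpose_sub,
      transpose_one, hsym, hQ]
    noncomm_ring
  -- mulVec injectivity
  have hMinj : ∀ y : Fin n → ℝ, M *ᵥ y = 0 → y = 0 := by
    intro y hy
    have h : (M⁻¹ * M) *ᵥ y = M⁻¹ *ᵥ (M *ᵥ y) := (mulVec_mulVec _ _ _).symm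
    rw [hMinv, one_mulVec, hy, mulVec_zero] at h
    exact h
  -- Q is positive definite
  have hQpsd : Q.PosSemidef := by
    rw [hQeq]
    exact (posSemidef_conjTranspose_mul_self _).add (posSemidef_conjTranspose_mul_self _)
  have hQpd : Q.PosDef := by
    refine Matrix.PosDef.of_dotProduct_mulVec_pos hQpsd.isHermitian (fun x hx => ?_)
    have hx' : ¬ ((M * P₀) *ᵥ x = 0 ∧ (M * (1 - P₀)) *ᵥ x = 0) := by
      rintro ⟨h1, h2⟩
      rw [← mulVec_mulVec] at h1 h2
      have hp := hMinj _ h1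
      have hq := hMinj _ h2
      apply hx
      have hxx : P₀ *ᵥ x + (1 - P₀) *ᵥ x = x := by
        rw [← add_mulVec]
        simp
      rw [← hxx, hp, hq, add_zero]
    rw [hQeq, add_mulVec, dotProduct_add, dot_conjTranspose_mul_self, dot_conjTranspose_mul_self]
    rcases not_and_or.mp hx' with h | h
    · have h1 : 0 < star ((M * P₀) *ᵥ x) ⬝ᵥ ((M * P₀) *ᵥ x) :=
        dotProduct_star_self_pos_iff.mpr h
      have h2 := dotProduct_star_self_nonneg ((M * (1 - P₀)) *ᵥ x)
      linarith
    · have h1 : 0 < star ((M * (1 - P₀)) *ᵥ x) ⬝ᵥ ((M * (1 - P₀)) *ᵥ x) :=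
        dotProduct_star_self_pos_iff.mpr h
      have h2 := dotProduct_star_self_nonneg ((M * P₀) *ᵥ x)
      linarith
  refine ⟨hQpd, ?_, ?_⟩
  · -- existence and uniqueness of the square root
    set R₀ := CFC.sqrt Q with hR₀
    have hR₀psd : R₀.PosSemidef := Matrix.nonneg_iff_posSemidef.mp (CFC.sqrt_nonneg Q)
    have hR₀sq : R₀ * R₀ = Q := CFC.sqrt_mul_sqrt_self Q hQpsd.nonneg
    have hR₀pd : R₀.PosDef := by
      refine Matrix.PosDef.of_dotProduct_mulVec_pos hR₀psd.isHermitian (fun x hx => ?_)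
      rcases lt_or_eq_of_le (hR₀psd.dotProduct_mulVec_nonneg x) with h | h
      · exact h
      · exfalso
        have h0 : R₀ *ᵥ x = 0 := (hR₀psd.dotProduct_mulVec_zero_iff x).mp h.symm
        have hq0 : Q *ᵥ x = 0 := by
          rw [← hR₀sq, ← mulVec_mulVec, h0, mulVec_zero]
        have hcon := hQpd.dotProduct_mulVec_pos hx
        rw [hq0, dotProduct_zero] at hcon
        exact lt_irrefl 0 hcon
    -- commutation with P₀ via the involution U = 1 - 2 P₀
    set U : Matrix (Fin n) (Fin n) ℝ := 1 - 2 * P₀ with hU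
    have hUh : Uᴴ = U := by
      have h2 : (2 : Matrix (Fin n) (Fin n) ℝ) * P₀ = P₀ + P₀ := two_mul P₀
      simp only [hU, h2, conjTranspose_sub, conjTranspose_add, conjTranspose_one, hsymh]
    have hUU : U * U = 1 := by
      have h : (1 - 2 * P₀) * (1 - 2 * P₀) = 1 - 4 * P₀ + 4 * (P₀ * P₀) := by noncomm_ring
      rw [hproj] at h
      rw [hU, h]; noncomm_ring
    have hUP : U * P₀ = -P₀ := by
      have h : (1 - 2 * P₀) * P₀ = P₀ - 2 * (P₀ * P₀) := by noncomm_ring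
      rw [hproj] at h
      rw [hU, h]; noncomm_ring
    have hPU : P₀ * U = -P₀ := by
      have h : P₀ * (1 - 2 * P₀) = P₀ - 2 * (P₀ * P₀) := by noncomm_ring
      rw [hproj] at h
      rw [hU, h]; noncomm_ring
    have hUQU : U * Q * U = Q := by
      have expand : U * Q * U =
          (U * P₀) * Mᵀ * M * (P₀ * U) + (U * (1 - P₀)) * Mᵀ * M * ((1 - P₀) * U) := by
        rw [hQ]; noncomm_ring
      have hU1P : U * (1 - P₀) = 1 - P₀ := by
        have h : (1 - 2 * P₀) * (1 - P₀) = 1 - P₀ - 2 * P₀ + 2 * (P₀ * P₀) := by noncomm_ring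
        rw [hproj] at h
        rw [hU, h]; noncomm_ring
      have h1PU : (1 - P₀) * U = 1 - P₀ := by
        have h : (1 - P₀) * (1 - 2 * P₀) = 1 - P₀ - 2 * P₀ + 2 * (P₀ * P₀) := by noncomm_ring
        rw [hproj] at h
        rw [hU, h]; noncomm_ring
      rw [expand, hUP, hPU, hU1P, h1PU, hQ]
      noncomm_ring
    have hcomm : P₀ * R₀ = R₀ * P₀ := by
      have hcong : U * R₀ * U = R₀ := by
        have hpsd' : (U * R₀ * Uᴴ).PosSemidef := hR₀psd.mul_mul_conjTranspose_same U
        rw [hUh] at hpsd'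
        have hsq : (U * R₀ * U) ^ 2 = R₀ ^ 2 := by
          have hassoc : (U * R₀ * U) * (U * R₀ * U) = U * (R₀ * (U * U) * R₀) * U := by
            noncomm_ring
          rw [pow_two, pow_two, hassoc, hUU, Matrix.mul_one, hR₀sq, hUQU]
        exact (CFC.sq_eq_sq_iff _ _ hpsd'.nonneg hR₀psd.nonneg).mp hsq
      have hUR : U * R₀ = R₀ * U := by
        calc U * R₀ = U * R₀ * (U * U) := by rw [hUU, Matrix.mul_one]
          _ = (U * R₀ * U) * U := by noncomm_ring
          _ = R₀ * U := by rw [hcong]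
      have e1 : U * R₀ = R₀ - (P₀ * R₀ + P₀ * R₀) := by rw [hU]; noncomm_ring
      have e2 : R₀ * U = R₀ - (R₀ * P₀ + R₀ * P₀) := by rw [hU]; noncomm_ring
      rw [e1, e2] at hUR
      have hsum : P₀ * R₀ + P₀ * R₀ = R₀ * P₀ + R₀ * P₀ := sub_right_injective hUR
      ext i j
      have h := congrFun (congrFun hsum i) j
      simp only [Matrix.add_apply] at h
      linarith
    refine ⟨R₀, ⟨hR₀pd, hR₀sq, hcomm⟩, ?_⟩
    rintro R₁ ⟨hR₁pd, hR₁sq, -⟩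
    exact (CFC.sq_eq_sq_iff _ _ hR₁pd.posSemidef.nonneg hR₀psd.nonneg).mp
      (by rw [pow_two, pow_two, hR₁sq, hR₀sq])
  · -- the main estimates
    intro R hRpd hRsq hRP
    have hRdet : IsUnit R.det := (Matrix.isUnit_iff_isUnit_det R).mp hRpd.isUnit
    have hRR' : R * R⁻¹ = 1 := Matrix.mul_nonsing_inv R hRdet
    have hR'R : R⁻¹ * R = 1 := Matrix.nonsing_inv_mul R hRdet
    have hRh : Rᴴ = R := hRpd.isHermitian
    have hRih : (R⁻¹)ᴴ = R⁻¹ := hRpd.inv.isHermitian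
    have hSu : IsUnit (M * R⁻¹) := hMu.mul hRpd.inv.isUnit
    have hSinv : (M * R⁻¹)⁻¹ = R * M⁻¹ := by
      rw [Matrix.mul_inv_rev, Matrix.nonsing_inv_nonsing_inv R hRdet]
    have hPRinv : R⁻¹ * P₀ = P₀ * R⁻¹ := by
      calc R⁻¹ * P₀ = R⁻¹ * P₀ * (R * R⁻¹) := by rw [hRR', Matrix.mul_one]
        _ = R⁻¹ * (P₀ * R) * R⁻¹ := by noncomm_ring
        _ = R⁻¹ * (R * P₀) * R⁻¹ := by rw [hRP]
        _ = (R⁻¹ * R) * (P₀ * R⁻¹) := by noncomm_ring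
        _ = P₀ * R⁻¹ := by rw [hR'R, Matrix.one_mul]
    refine ⟨hSu, ?_, ?_, ?_⟩
    · rw [hSinv]
      calc M * R⁻¹ * P₀ * (R * M⁻¹) = M * (R⁻¹ * P₀ * R) * M⁻¹ := by noncomm_ring
        _ = M * (P₀ * (R⁻¹ * R)) * M⁻¹ := by rw [hPRinv]; noncomm_ring
        _ = M * P₀ * M⁻¹ := by rw [hR'R, Matrix.mul_one]
    · -- ‖S‖ ≤ √2
      set G : Matrix (Fin n) (Fin n) ℝ := M * (1 - 2 * P₀) * R⁻¹ with hG
      have key : (M * R⁻¹)ᴴ * (M * R⁻¹) + Gᴴ * G = (2 : ℝ) • 1 := by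
        have hU2h : (1 - 2 * P₀)ᴴ = 1 - 2 * P₀ := by
          have h2 : (2 : Matrix (Fin n) (Fin n) ℝ) * P₀ = P₀ + P₀ := two_mul P₀
          simp only [h2, conjTranspose_sub, conjTranspose_add, conjTranspose_one, hsymh]
        have hGh : Gᴴ = R⁻¹ * (1 - 2 * P₀) * Mᴴ := by
          rw [hG]
          simp only [conjTranspose_mul, hRih, hU2h]
          noncomm_ring
        have hSh : (M * R⁻¹)ᴴ = R⁻¹ * Mᴴ := by rw [conjTranspose_mul, hRih]
        rw [hGh, hSh, hG]
        have expand : R⁻¹ * Mᴴ * (M * R⁻¹) + R⁻¹ * (1 - 2 * P₀) * Mᴴ * (M * (1 - 2 * P₀) * R⁻¹)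
            = R⁻¹ * (Mᴴ * M + (1 - 2 * P₀) * (Mᴴ * M) * (1 - 2 * P₀)) * R⁻¹ := by
          noncomm_ring
        have hmid : Mᴴ * M + (1 - 2 * P₀) * (Mᴴ * M) * (1 - 2 * P₀) = Q + Q := by
          rw [hQ]
          simp only [conjTranspose_eq_transpose_of_trivial]
          noncomm_ring
        rw [expand, hmid, ← hRsq]
        calc R⁻¹ * (R * R + R * R) * R⁻¹
            = (R⁻¹ * R) * (R * R⁻¹) + (R⁻¹ * R) * (R * R⁻¹) := by noncomm_ring
          _ = (2 : ℝ) • 1 := by rw [hR'R, hRR', Matrix.one_mul, two_smul]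
      apply opN_le_sqrt _ _ (by norm_num)
      intro v
      have h1 : ‖toEuclideanCLM (𝕜 := ℝ) (M * R⁻¹) v‖ ^ 2 + ‖toEuclideanCLM (𝕜 := ℝ) G v‖ ^ 2
          = 2 * ‖v‖ ^ 2 := by
        rw [sq_norm_clm_apply, sq_norm_clm_apply, ← inner_add_left]
        have : toEuclideanCLM (𝕜 := ℝ) ((M * R⁻¹)ᴴ * (M * R⁻¹)) v
            + toEuclideanCLM (𝕜 := ℝ) (Gᴴ * G) v
            = toEuclideanCLM (𝕜 := ℝ) ((2 : ℝ) • (1 : Matrix (Fin n) (Fin n) ℝ)) v := by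
          rw [← ContinuousLinearMap.add_apply, ← _root_.map_add, key]
        rw [this, _root_.map_smul, _root_.map_one, ContinuousLinearMap.smul_apply,
          ContinuousLinearMap.one_apply, real_inner_smul_left, real_inner_self_eq_norm_sq]
      nlinarith [sq_nonneg ‖toEuclideanCLM (𝕜 := ℝ) G v‖]
    · -- ‖S⁻¹‖ bound
      rw [hSinv]
      set A : Matrix (Fin n) (Fin n) ℝ := M * P₀ * M⁻¹ with hA
      set B : Matrix (Fin n) (Fin n) ℝ := M * (1 - P₀) * M⁻¹ with hB
      have key2 : (R * M⁻¹)ᴴ * (R * M⁻¹) = Aᴴ * A + Bᴴ * B := by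
        have hAh : Aᴴ = (M⁻¹)ᴴ * P₀ * Mᴴ := by
          rw [hA]; simp only [conjTranspose_mul, hsymh]; noncomm_ring
        have hBh : Bᴴ = (M⁻¹)ᴴ * (1 - P₀) * Mᴴ := by
          rw [hB]
          simp only [conjTranspose_mul, conjTranspose_sub, conjTranspose_one, hsymh]
          noncomm_ring
        have hSih : (R * M⁻¹)ᴴ = (M⁻¹)ᴴ * R := by rw [conjTranspose_mul, hRh]
        rw [hAh, hBh, hSih, hA, hB]
        have expand : (M⁻¹)ᴴ * P₀ * Mᴴ * (M * P₀ * M⁻¹) + (M⁻¹)ᴴ * (1 - P₀) * Mᴴ * (M * (1 - P₀) * M⁻¹)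
            = (M⁻¹)ᴴ * (P₀ * Mᴴ * M * P₀ + (1 - P₀) * Mᴴ * M * (1 - P₀)) * M⁻¹ := by
          noncomm_ring
        have hQ' : P₀ * Mᴴ * M * P₀ + (1 - P₀) * Mᴴ * M * (1 - P₀) = Q := by
          rw [hQ]; simp only [conjTranspose_eq_transpose_of_trivial]
        rw [expand, hQ', ← hRsq]
        noncomm_ring
      have hcnn : (0:ℝ) ≤ opN A ^ 2 + opN B ^ 2 := by positivity
      apply opN_le_sqrt _ _ hcnn
      intro v
      have h1 : ‖toEuclideanCLM (𝕜 := ℝ) (R * M⁻¹) v‖ ^ 2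
          = ‖toEuclideanCLM (𝕜 := ℝ) A v‖ ^ 2 + ‖toEuclideanCLM (𝕜 := ℝ) B v‖ ^ 2 := by
        rw [sq_norm_clm_apply, sq_norm_clm_apply, sq_norm_clm_apply, ← inner_add_left,
          ← ContinuousLinearMap.add_apply, ← _root_.map_add, key2]
      have hAb : ‖toEuclideanCLM (𝕜 := ℝ) A v‖ ≤ opN A * ‖v‖ :=
        ContinuousLinearMap.le_opNorm _ v
      have hBb : ‖toEuclideanCLM (𝕜 := ℝ) B v‖ ≤ opN B * ‖v‖ :=
        ContinuousLinearMap.le_opNorm _ v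
      have hAnn := norm_nonneg (toEuclideanCLM (𝕜 := ℝ) A v)
      have hBnn := norm_nonneg (toEuclideanCLM (𝕜 := ℝ) B v)
      rw [h1]
      nlinarith [norm_nonneg v, ContinuousLinearMap.opNorm_nonneg
        (toEuclideanCLM (𝕜 := ℝ) (n := Fin n) A), ContinuousLinearMap.opNorm_nonneg
        (toEuclideanCLM (𝕜 := ℝ) (n := Fin n) B)]
end
end
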